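/- arXiv:1508.02196 — 5 statements merged into one kernel-verified Lean document; each statement's English description precedes it below -/
import Mathlib

section
/- Suppose f : ℝ×ℝ → ℝ maps [0,1]×[0,1] into [0,1], z ↦ f(z,ε) is continuous on [0,1] for each ε ∈ [0,1], f(x,0)=0 for all x ∈ [0,1], and for each fixed x ∈ (0,1] the map ε ↦ f(x,ε) is strictly increasing on (0,1]. Suppose g : ℝ → ℝ maps [0,1] into [0,1], is strictly increasing on (0,1], and satisfies g(0)=0. Then for every x ∈ (0,1] and all ε₁, ε₂ with 0 ≤ ε₁ < ε₂ ≤ 1, U(x;ε₂) < U(x;ε₁); that is, the potential function is strictly decreasing in ε. -/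
open Set intervalIntegral

/-- `G g x = ∫₀ˣ g(z) dz`. -/
noncomputable def Gfun (g : ℝ → ℝ) (x : ℝ) : ℝ := ∫ z in (0:ℝ)..x, g z

/-- `F f y ε = ∫₀ʸ f(z,ε) dz`. -/
noncomputable def Ffun (f : ℝ → ℝ → ℝ) (y ε : ℝ) : ℝ := ∫ z in (0:ℝ)..y, f z ε

/-- The potential function `U(x;ε) = x·g(x) − G(x) − F(g(x);ε)`. -/
noncomputable def Ufun (f : ℝ → ℝ → ℝ) (g : ℝ → ℝ) (x ε : ℝ) : ℝ :=
  x * g x - Gfun g x - Ffun f (g x) ε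

/-- the potential function is strictly decreasing in `ε`. -/
theorem potential_strictAnti_in_eps
    (f : ℝ → ℝ → ℝ) (g : ℝ → ℝ)
    (hf_maps : ∀ x ∈ Icc (0:ℝ) 1, ∀ ε ∈ Icc (0:ℝ) 1, f x ε ∈ Icc (0:ℝ) 1)
    (hf_cont : ∀ ε ∈ Icc (0:ℝ) 1, ContinuousOn (fun z => f z ε) (Icc (0:ℝ) 1))
    (hf0 : ∀ x ∈ Icc (0:ℝ) 1, f x 0 = 0)
    (hf_mono : ∀ x ∈ Ioc (0:ℝ) 1, StrictMonoOn (fun ε => f x ε) (Ioc (0:ℝ) 1))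
    (hg_maps : MapsTo g (Icc (0:ℝ) 1) (Icc (0:ℝ) 1))
    (hg_mono : StrictMonoOn g (Ioc (0:ℝ) 1))
    (hg0 : g 0 = 0) :
    ∀ x ∈ Ioc (0:ℝ) 1, ∀ ε₁ ε₂ : ℝ, 0 ≤ ε₁ → ε₁ < ε₂ → ε₂ ≤ 1 →
      Ufun f g x ε₂ < Ufun f g x ε₁ := by
  intro x hx ε₁ ε₂ hε₁ h12 hε₂
  have hxI : x ∈ Icc (0:ℝ) 1 := ⟨hx.1.le, hx.2⟩
  have hε₂I : ε₂ ∈ Ioc (0:ℝ) 1 := ⟨lt_of_le_of_lt hε₁ h12, hε₂⟩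
  have hε₂I' : ε₂ ∈ Icc (0:ℝ) 1 := ⟨hε₂I.1.le, hε₂⟩
  have hε₁I' : ε₁ ∈ Icc (0:ℝ) 1 := ⟨hε₁, le_of_lt (lt_of_lt_of_le h12 hε₂)⟩
  -- g x > 0
  have hgx_pos : 0 < g x := by
    have hhalf : x / 2 ∈ Ioc (0:ℝ) 1 := ⟨by linarith [hx.1], by linarith [hx.1, hx.2]⟩
    have h1 : g (x / 2) < g x := hg_mono hhalf hx (by linarith [hx.1])
    have h2 : (0:ℝ) ≤ g (x / 2) := (hg_maps ⟨hhalf.1.le, hhalf.2⟩).1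
    linarith
  have hgx1 : g x ≤ 1 := (hg_maps hxI).2
  -- pointwise comparison of the integrands
  have key : ∀ z ∈ Ioc (0:ℝ) (g x), f z ε₁ < f z ε₂ := by
    intro z hz
    have hzI : z ∈ Ioc (0:ℝ) 1 := ⟨hz.1, hz.2.trans hgx1⟩
    have hzI' : z ∈ Icc (0:ℝ) 1 := ⟨hz.1.le, hzI.2⟩
    rcases eq_or_lt_of_le hε₁ with h0 | hpos
    · rw [← h0, hf0 z hzI']
      have hhalf : ε₂ / 2 ∈ Ioc (0:ℝ) 1 := ⟨by linarith [hε₂I.1], by linarith [hε₂I.1, hε₂]⟩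
      have h1 : f z (ε₂ / 2) < f z ε₂ := hf_mono z hzI hhalf hε₂I (by linarith [hε₂I.1])
      have h2 : (0:ℝ) ≤ f z (ε₂ / 2) := (hf_maps z hzI' _ ⟨hhalf.1.le, hhalf.2⟩).1
      linarith
    · exact hf_mono z hzI ⟨hpos, hε₁I'.2⟩ hε₂I h12
  have hcont₁ : ContinuousOn (fun z => f z ε₁) (Icc 0 (g x)) :=
    (hf_cont ε₁ hε₁I').mono (Icc_subset_Icc le_rfl hgx1)
  have hcont₂ : ContinuousOn (fun z => f z ε₂) (Icc 0 (g x)) :=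
    (hf_cont ε₂ hε₂I').mono (Icc_subset_Icc le_rfl hgx1)
  have hlt : Ffun f (g x) ε₁ < Ffun f (g x) ε₂ := by
    apply intervalIntegral.integral_lt_integral_of_continuousOn_of_le_of_exists_lt hgx_pos
      hcont₁ hcont₂ (fun z hz => (key z hz).le)
    exact ⟨g x, ⟨hgx_pos.le, le_rfl⟩, key (g x) ⟨hgx_pos, le_rfl⟩⟩
  simp only [Ufun]
  linarith
end

section
/- Let ε ∈ [0,1]. Suppose g : ℝ → ℝ maps [0,1] into [0,1], is differentiable at every point of [0,1] (one-sided at the endpoints) with g'(x) > 0 for all x ∈ (0,1], and satisfies g(0)=0, and suppose z ↦ f(z,ε) is continuous on [0,1] with f(0,ε)=0. Then for every x ∈ [0,1]: x is a fixed point of the recursion, i.e. x = f(g(x),ε), if and only if x is a stationary point of the potential function, i.e. the derivative of U(·;ε) within [0,1] at x equals 0. -/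
open Set intervalIntegral

/-- `x ∈ [0,1]` is a fixed point of the recursion
`x = f(g(x),ε)` iff it is a stationary point of the potential function,
i.e. the derivative of `U(·;ε)` within `[0,1]` at `x` vanishes. -/
theorem fixed_point_iff_stationary
    (f : ℝ → ℝ → ℝ) (g g' : ℝ → ℝ) (ε : ℝ) (hε : ε ∈ Icc (0:ℝ) 1)
    (hg_maps : MapsTo g (Icc (0:ℝ) 1) (Icc (0:ℝ) 1))
    (hg_deriv : ∀ x ∈ Icc (0:ℝ) 1, HasDerivWithinAt g (g' x) (Icc (0:ℝ) 1) x)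
    (hg'_pos : ∀ x ∈ Ioc (0:ℝ) 1, 0 < g' x)
    (hg0 : g 0 = 0)
    (hf_cont : ContinuousOn (fun z => f z ε) (Icc (0:ℝ) 1))
    (hf0 : f 0 ε = 0) :
    ∀ x ∈ Icc (0:ℝ) 1,
      (x = f (g x) ε ↔
        derivWithin (fun y => Ufun f g y ε) (Icc (0:ℝ) 1) x = 0) := by
  have hg_cont : ContinuousOn g (Icc (0:ℝ) 1) := fun x hx =>
    (hg_deriv x hx).continuousWithinAt
  intro x hx
  haveI : Fact (x ∈ Icc (0:ℝ) 1) := ⟨hx⟩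
  -- derivative of G
  have hG : HasDerivWithinAt (fun y => Gfun g y) (g x) (Icc (0:ℝ) 1) x := by
    apply integral_hasDerivWithinAt_right
      (t := Icc (0:ℝ) 1)
    · exact (hg_cont.mono (by
        rw [uIcc_of_le hx.1]; exact Icc_subset_Icc le_rfl hx.2)).intervalIntegrable
    · exact hg_cont.stronglyMeasurableAtFilter_nhdsWithin measurableSet_Icc x
    · exact hg_cont x hx
  -- derivative of F at g x
  haveI : Fact (g x ∈ Icc (0:ℝ) 1) := ⟨hg_maps hx⟩
  have hF : HasDerivWithinAt (fun y => Ffun f y ε) (f (g x) ε) (Icc (0:ℝ) 1) (g x) := by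
    apply integral_hasDerivWithinAt_right (t := Icc (0:ℝ) 1)
    · exact (hf_cont.mono (by
        rw [uIcc_of_le (hg_maps hx).1]
        exact Icc_subset_Icc le_rfl (hg_maps hx).2)).intervalIntegrable
    · exact hf_cont.stronglyMeasurableAtFilter_nhdsWithin measurableSet_Icc (g x)
    · exact hf_cont (g x) (hg_maps hx)
  have hFg : HasDerivWithinAt (fun y => Ffun f (g y) ε) (f (g x) ε * g' x)
      (Icc (0:ℝ) 1) x :=
    HasDerivWithinAt.comp x hF (hg_deriv x hx) hg_maps
  have hxg : HasDerivWithinAt (fun y => y * g y) (1 * g x + x * g' x)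
      (Icc (0:ℝ) 1) x :=
    (hasDerivWithinAt_id x _).mul (hg_deriv x hx)
  have hU : HasDerivWithinAt (fun y => Ufun f g y ε)
      ((x - f (g x) ε) * g' x) (Icc (0:ℝ) 1) x := by
    have := (hxg.sub hG).sub hFg
    convert this using 1
    case e'_8 => rfl
    case e'_9 => ring
    all_goals rfl
  have hder : derivWithin (fun y => Ufun f g y ε) (Icc (0:ℝ) 1) x
      = (x - f (g x) ε) * g' x :=
    hU.derivWithin (uniqueDiffOn_Icc (by norm_num) x hx)
  rw [hder]
  constructor
  · intro h; rw [← h]; ring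
  · intro h
    rcases eq_or_lt_of_le hx.1 with h0 | h0
    · rw [← h0] at *; rw [hg0, hf0]
    · have hpos := hg'_pos x ⟨h0, hx.2⟩
      have := mul_eq_zero.mp h
      rcases this with h1 | h1
      · linarith [sub_eq_zero.mp h1]
      · exact absurd h1 (ne_of_gt hpos)
end

section
/- Suppose f : ℝ×ℝ → ℝ maps [0,1]×[0,1] into [0,1], is nondecreasing in its second argument on [0,1] for each fixed first argument in [0,1], and x ↦ f(x,ε) is nondecreasing and continuous on [0,1] for each ε ∈ [0,1]; suppose g : ℝ → ℝ maps [0,1] into [0,1] and is nondecreasing and continuous on [0,1]. Suppose there exists ε₀ ∈ [0,1] with f(g(x),ε₀) < x for all x ∈ (0,1], and define ε^BP = sup{ε ∈ [0,1] : f(g(x),ε) < x for all x ∈ (0,1]}. Then for every ε ∈ [0,1] with ε < ε^BP, the sequence defined by x⁽⁰⁾ = 1 and x⁽ⁱ⁺¹⁾ = f(g(x⁽ⁱ⁾),ε) converges to 0. -/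
open Set Filter

/-- below the BP threshold
`ε^BP = sup{ε ∈ [0,1] : f(g(x),ε) < x for all x ∈ (0,1]}`,
the scalar recursion started at `x⁽⁰⁾ = 1` converges to `0`. -/
theorem below_BP_threshold_recursion_to_zero
    (f : ℝ → ℝ → ℝ) (g : ℝ → ℝ)
    (hf_maps : ∀ x ∈ Icc (0:ℝ) 1, ∀ ε ∈ Icc (0:ℝ) 1, f x ε ∈ Icc (0:ℝ) 1)
    (hf_mono_eps : ∀ x ∈ Icc (0:ℝ) 1, MonotoneOn (fun ε => f x ε) (Icc (0:ℝ) 1))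
    (hf_mono : ∀ ε ∈ Icc (0:ℝ) 1, MonotoneOn (fun x => f x ε) (Icc (0:ℝ) 1))
    (hf_cont : ∀ ε ∈ Icc (0:ℝ) 1, ContinuousOn (fun x => f x ε) (Icc (0:ℝ) 1))
    (hg_maps : MapsTo g (Icc (0:ℝ) 1) (Icc (0:ℝ) 1))
    (hg_mono : MonotoneOn g (Icc (0:ℝ) 1))
    (hg_cont : ContinuousOn g (Icc (0:ℝ) 1))
    (ε₀ : ℝ) (hε₀ : ε₀ ∈ Icc (0:ℝ) 1)
    (hε₀lt : ∀ x ∈ Ioc (0:ℝ) 1, f (g x) ε₀ < x) :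
    ∀ ε ∈ Icc (0:ℝ) 1,
      ε < sSup {ε' : ℝ | ε' ∈ Icc (0:ℝ) 1 ∧ ∀ x ∈ Ioc (0:ℝ) 1, f (g x) ε' < x} →
      ∀ x : ℕ → ℝ, x 0 = 1 → (∀ i, x (i + 1) = f (g (x i)) ε) →
        Tendsto x atTop (nhds 0) := by
  intro ε hε hlt x hx0 hrec
  set S := {ε' : ℝ | ε' ∈ Icc (0:ℝ) 1 ∧ ∀ x ∈ Ioc (0:ℝ) 1, f (g x) ε' < x} with hS
  -- get ε' ∈ S with ε < ε'
  obtain ⟨ε', hε'S, hεε'⟩ := exists_lt_of_lt_csSup (Set.nonempty_of_mem (show ε₀ ∈ S from ⟨hε₀, hε₀lt⟩)) hlt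
  obtain ⟨hε'mem, hε'lt⟩ := hε'S
  -- strict contraction at ε for positive points
  have hstrict : ∀ y ∈ Ioc (0:ℝ) 1, f (g y) ε < y := by
    intro y hy
    have hy' : y ∈ Icc (0:ℝ) 1 := ⟨le_of_lt hy.1, hy.2⟩
    have h1 : f (g y) ε ≤ f (g y) ε' :=
      hf_mono_eps (g y) (hg_maps hy') hε hε'mem (le_of_lt hεε')
    exact lt_of_le_of_lt h1 (hε'lt y hy)
  -- f (g ·) ε ≤ id on [0,1]
  have hle : ∀ y ∈ Icc (0:ℝ) 1, f (g y) ε ≤ y := by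
    intro y hy
    rcases eq_or_lt_of_le hy.1 with h | h
    · -- y = 0
      by_contra hc
      push_neg at hc
      rw [← h] at hc
      set c := min (f (g 0) ε) 1 with hc'
      have hf0 : f (g 0) ε ∈ Icc (0:ℝ) 1 :=
        hf_maps _ (hg_maps (left_mem_Icc.mpr zero_le_one)) ε hε
      have hcmem : c ∈ Ioc (0:ℝ) 1 := ⟨lt_min hc zero_lt_one, min_le_right _ _⟩
      have hcmem' : c ∈ Icc (0:ℝ) 1 := ⟨le_of_lt hcmem.1, hcmem.2⟩
      have : f (g 0) ε ≤ f (g c) ε :=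
        hf_mono ε hε (hg_maps (left_mem_Icc.mpr zero_le_one)) (hg_maps hcmem')
          (hg_mono (left_mem_Icc.mpr zero_le_one) hcmem' (le_of_lt hcmem.1))
      have := lt_of_le_of_lt this (hstrict c hcmem)
      exact absurd this (not_lt.mpr (min_le_left _ _))
    · exact le_of_lt (hstrict y ⟨h, hy.2⟩)
  -- sequence stays in [0,1]
  have hmem : ∀ i, x i ∈ Icc (0:ℝ) 1 := by
    intro i
    induction i with
    | zero => rw [hx0]; exact right_mem_Icc.mpr zero_le_one
    | succ n ih => rw [hrec n]; exact hf_maps _ (hg_maps ih) ε hε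
  -- antitone
  have hanti : Antitone x := antitone_nat_of_succ_le fun n => by
    rw [hrec n]; exact hle _ (hmem n)
  -- bounded below
  have hbdd : BddBelow (range x) := ⟨0, fun y ⟨n, hn⟩ => hn ▸ (hmem n).1⟩
  set L := ⨅ n, x n with hL
  have hconv : Tendsto x atTop (nhds L) := tendsto_atTop_ciInf hanti hbdd
  have hLmem : L ∈ Icc (0:ℝ) 1 := by
    constructor
    · exact le_ciInf fun n => (hmem n).1
    · exact le_trans (ciInf_le hbdd 0) (hmem 0).2
  -- L = 0
  have hL0 : L = 0 := by
    by_contra hc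
    have hLpos : 0 < L := lt_of_le_of_ne hLmem.1 (Ne.symm hc)
    -- continuity: f (g ·) ε continuous on [0,1]
    have hcont : ContinuousOn (fun y => f (g y) ε) (Icc (0:ℝ) 1) :=
      (hf_cont ε hε).comp hg_cont hg_maps
    have htend : Tendsto x atTop (nhdsWithin L (Icc (0:ℝ) 1)) :=
      tendsto_nhdsWithin_of_tendsto_nhds_of_eventually_within x hconv
        (Eventually.of_forall hmem)
    have h1 : Tendsto (fun i => f (g (x i)) ε) atTop (nhds (f (g L) ε)) :=
      (hcont L hLmem).tendsto.comp htend
    have h2 : Tendsto (fun i => x (i + 1)) atTop (nhds L) :=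
      hconv.comp (tendsto_add_atTop_nat 1)
    have h3 : Tendsto (fun i => x (i + 1)) atTop (nhds (f (g L) ε)) := by
      simpa only [hrec] using h1
    have : f (g L) ε = L := tendsto_nhds_unique h3 h2
    exact absurd (hstrict L ⟨hLpos, hLmem.2⟩) (by rw [this]; exact lt_irrefl L)
  rwa [hL0] at hconv
end

section
/- Let (f,g) be a scalar admissible system with potential function U and potential threshold ε*. Then for every ε ∈ [0,1] with ε < ε*, there exists m₀ ∈ ℕ such that for every coupling memory m ≥ m₀, every chain length L ∈ ℕ, and every family (x_t)_{t∈ℤ} with x_t ∈ [0,1] for all t, x_t = 0 for all t ∉ {1,…,L}, and x_t = (1/(m+1))·Σ_{k=0}^{m} f( (1/(m+1))·Σ_{j=0}^{m} g(x_{t+j−k}), ε ) for all t ∈ {1,…,L}, one has x_t = 0 for all t ∈ ℤ; that is, the only fixed point of the spatially coupled recursion is x = 0. -/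
open Set intervalIntegral

/-- The minimum unstable fixed point
`u(ε) = sup{ x̃ ∈ [0,1] : f(g(x),ε) < x for all x ∈ (0,x̃) }`. -/
noncomputable def minUnstable (f : ℝ → ℝ → ℝ) (g : ℝ → ℝ) (ε : ℝ) : ℝ :=
  sSup {xt : ℝ | xt ∈ Icc (0:ℝ) 1 ∧ ∀ x ∈ Ioo (0:ℝ) xt, f (g x) ε < x}

/-- The potential threshold
`ε* = sup{ ε ∈ [0,1] : u(ε) > 0 and U(x;ε) > 0 for all x ∈ [u(ε),1] }`. -/
noncomputable def potentialThreshold (f : ℝ → ℝ → ℝ) (g : ℝ → ℝ) : ℝ :=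
  sSup {ε : ℝ | ε ∈ Icc (0:ℝ) 1 ∧ 0 < minUnstable f g ε ∧
    ∀ x ∈ Icc (minUnstable f g ε) 1, 0 < Ufun f g x ε}

namespace TSaux


/-- clamp to [0,1] -/
noncomputable def cl (t : ℝ) : ℝ := max 0 (min 1 t)

lemma cl_mem (t : ℝ) : cl t ∈ Icc (0:ℝ) 1 :=
  ⟨le_max_left _ _, max_le (by norm_num) (min_le_left _ _)⟩

lemma cl_eq {t : ℝ} (ht : t ∈ Icc (0:ℝ) 1) : cl t = t := by
  have h1 : min 1 t = t := min_eq_right ht.2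
  simp [cl, h1, ht.1]

lemma cl_continuous : Continuous cl := by
  unfold cl; fun_prop

lemma cl_monotone : Monotone cl := fun a b hab => by
  dsimp [cl]; exact max_le_max le_rfl (min_le_min le_rfl hab)

/-- reindex : range w ↦ Icc t (t+w-1) -/
lemma sum_range_add (F : ℤ → ℝ) (t : ℤ) (w : ℕ) :
    ∑ j ∈ Finset.range w, F (t + (j:ℤ)) = ∑ l ∈ Finset.Icc t (t + w - 1), F l := by
  refine Finset.sum_nbij' (fun j => t + (j:ℤ)) (fun l => (l - t).toNat) ?_ ?_ ?_ ?_ ?_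
  · intro j hj
    simp only [Finset.mem_range] at hj
    simp only [Finset.mem_Icc]
    omega
  · intro l hl
    simp only [Finset.mem_Icc] at hl
    simp only [Finset.mem_range]
    omega
  · intro j hj; simp only [Finset.mem_range] at hj; simp
  · intro l hl; simp only [Finset.mem_Icc] at hl; simp; omega
  · intro j hj; rfl

/-- reindex : range w ↦ Icc (t-w+1) t, reflected -/
lemma sum_range_sub (F : ℤ → ℝ) (t : ℤ) (w : ℕ) :
    ∑ k ∈ Finset.range w, F (t - (k:ℤ)) = ∑ l ∈ Finset.Icc (t - w + 1) t, F l := by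
  refine Finset.sum_nbij' (fun k => t - (k:ℤ)) (fun l => (t - l).toNat) ?_ ?_ ?_ ?_ ?_
  · intro j hj
    simp only [Finset.mem_range] at hj
    simp only [Finset.mem_Icc]
    omega
  · intro l hl
    simp only [Finset.mem_Icc] at hl
    simp only [Finset.mem_range]
    omega
  · intro j hj; simp only [Finset.mem_range] at hj; simp
  · intro l hl; simp only [Finset.mem_Icc] at hl; simp; omega
  · intro j hj; rfl

/-- shift reindex on Icc -/
lemma sum_Icc_shift (F : ℤ → ℝ) (a b c : ℤ) :
    ∑ l ∈ Finset.Icc a b, F (l + c) = ∑ l ∈ Finset.Icc (a+c) (b+c), F l := by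
  refine Finset.sum_nbij' (fun l => l + c) (fun l => l - c) ?_ ?_ ?_ ?_ ?_ <;>
    (intros; simp_all only [Finset.mem_Icc]) <;> omega

lemma sum_Icc_shift_down (F : ℤ → ℝ) (a b : ℤ) :
    ∑ l ∈ Finset.Icc a b, F (l - 1) = ∑ l ∈ Finset.Icc (a-1) (b-1), F l := by
  calc ∑ l ∈ Finset.Icc a b, F (l-1) = ∑ l ∈ Finset.Icc a b, F (l + (-1)) := by
        apply Finset.sum_congr rfl; intro i _; norm_num [sub_eq_add_neg]
    _ = ∑ l ∈ Finset.Icc (a + (-1)) (b + (-1)), F l := sum_Icc_shift F a b (-1)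
    _ = _ := by congr 1 <;> ring

/-- telescoping over Icc 1 N for ℤ-indexed -/
lemma sum_Icc_telescope (F : ℤ → ℝ) (N : ℕ) :
    ∑ l ∈ Finset.Icc (1:ℤ) (N:ℤ), (F l - F (l-1)) = F (N:ℤ) - F 0 := by
  induction N with
  | zero => simp
  | succ n ih =>
      have h : Finset.Icc (1:ℤ) ((n:ℤ)+1) = insert ((n:ℤ)+1) (Finset.Icc (1:ℤ) (n:ℤ)) := by
        ext a; simp only [Finset.mem_Icc, Finset.mem_insert]; omega
      push_cast
      rw [h, Finset.sum_insert (by simp)]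
      push_cast at ih
      rw [ih]
      ring_nf


section FG

variable {f : ℝ → ℝ → ℝ} {g : ℝ → ℝ} {ε : ℝ}

/-- f is nonneg / ≤ 1 -/
lemma f_mem (hf_maps : ∀ x ∈ Icc (0:ℝ) 1, ∀ ε ∈ Icc (0:ℝ) 1, f x ε ∈ Icc (0:ℝ) 1)
    {x : ℝ} (hx : x ∈ Icc (0:ℝ) 1) (hε : ε ∈ Icc (0:ℝ) 1) : f x ε ∈ Icc (0:ℝ) 1 :=
  hf_maps x hx ε hε

lemma f_monoL (hf_maps : ∀ x ∈ Icc (0:ℝ) 1, ∀ ε ∈ Icc (0:ℝ) 1, f x ε ∈ Icc (0:ℝ) 1)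
    (hf_mono_x : ∀ ε ∈ Ioc (0:ℝ) 1, StrictMonoOn (fun x => f x ε) (Ioc (0:ℝ) 1))
    (hf_zero : ∀ x ∈ Icc (0:ℝ) 1, ∀ ε ∈ Icc (0:ℝ) 1, f 0 ε = 0 ∧ f x 0 = 0)
    (hε : ε ∈ Icc (0:ℝ) 1) : MonotoneOn (fun y => f y ε) (Icc (0:ℝ) 1) := by
  rcases eq_or_lt_of_le hε.1 with hε0 | hε0
  · intro a ha b hb hab
    simp only
    rw [← hε0, (hf_zero a ha 0 (by norm_num)).2, (hf_zero b hb 0 (by norm_num)).2]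
  · intro a ha b hb hab
    rcases eq_or_lt_of_le ha.1 with ha0 | ha0
    · have h0 := (hf_zero b hb ε hε).1
      simp only [← ha0, h0]
      exact (hf_maps b hb ε hε).1
    · rcases eq_or_lt_of_le hab with rfl | hab'
      · exact le_rfl
      · exact le_of_lt (hf_mono_x ε ⟨hε0, hε.2⟩ ⟨ha0, ha.2⟩ ⟨lt_of_lt_of_le ha0 hab, hb.2⟩ hab')

lemma g_monoOn (hg_maps : MapsTo g (Icc (0:ℝ) 1) (Icc (0:ℝ) 1))
    (hg_mono : StrictMonoOn g (Ioc (0:ℝ) 1)) (hg0 : g 0 = 0) :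
    MonotoneOn g (Icc (0:ℝ) 1) := by
  intro a ha b hb hab
  rcases eq_or_lt_of_le ha.1 with ha0 | ha0
  · rw [← ha0, hg0]; exact (hg_maps hb).1
  · rcases eq_or_lt_of_le hab with rfl | hab'
    · exact le_rfl
    · exact le_of_lt (hg_mono ⟨ha0, ha.2⟩ ⟨lt_of_lt_of_le ha0 hab, hb.2⟩ hab')

end FG

end TSaux

namespace TSaux

section Clamped

variable (f : ℝ → ℝ → ℝ) (g : ℝ → ℝ) (ε : ℝ)

noncomputable def fcl : ℝ → ℝ := fun y => f (cl y) ε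
noncomputable def gcl : ℝ → ℝ := fun y => g (cl y)
noncomputable def Fc : ℝ → ℝ := fun y => ∫ t in (0:ℝ)..y, fcl f ε t
noncomputable def Gc : ℝ → ℝ := fun y => ∫ t in (0:ℝ)..y, gcl g t

variable {f g ε}

lemma fcl_continuous (hf_smooth : ContDiffOn ℝ 2 (fun p : ℝ × ℝ => f p.1 p.2)
      (Icc (0:ℝ) 1 ×ˢ Icc (0:ℝ) 1)) (hε : ε ∈ Icc (0:ℝ) 1) :
    Continuous (fcl f ε) := by
  have h1 : Continuous fun y : ℝ => ((cl y, ε) : ℝ × ℝ) := by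
    exact (cl_continuous.prodMk continuous_const)
  exact hf_smooth.continuousOn.comp_continuous h1 fun y => ⟨cl_mem y, hε⟩

lemma gcl_continuous (hg_smooth : ContDiffOn ℝ 2 g (Icc (0:ℝ) 1)) :
    Continuous (gcl g) :=
  hg_smooth.continuousOn.comp_continuous cl_continuous fun y => cl_mem y

lemma fcl_eq {y : ℝ} (hy : y ∈ Icc (0:ℝ) 1) : fcl f ε y = f y ε := by
  rw [fcl, cl_eq hy]

lemma gcl_eq {y : ℝ} (hy : y ∈ Icc (0:ℝ) 1) : gcl g y = g y := by
  show g (cl y) = g y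
  rw [cl_eq hy]

lemma fcl_mem (hf_maps : ∀ x ∈ Icc (0:ℝ) 1, ∀ ε ∈ Icc (0:ℝ) 1, f x ε ∈ Icc (0:ℝ) 1)
    (hε : ε ∈ Icc (0:ℝ) 1) (y : ℝ) : fcl f ε y ∈ Icc (0:ℝ) 1 :=
  hf_maps _ (cl_mem y) ε hε

lemma gcl_mem (hg_maps : MapsTo g (Icc (0:ℝ) 1) (Icc (0:ℝ) 1)) (y : ℝ) :
    gcl g y ∈ Icc (0:ℝ) 1 := hg_maps (cl_mem y)

lemma fcl_monotone (hf_maps : ∀ x ∈ Icc (0:ℝ) 1, ∀ ε ∈ Icc (0:ℝ) 1, f x ε ∈ Icc (0:ℝ) 1)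
    (hf_mono_x : ∀ ε ∈ Ioc (0:ℝ) 1, StrictMonoOn (fun x => f x ε) (Ioc (0:ℝ) 1))
    (hf_zero : ∀ x ∈ Icc (0:ℝ) 1, ∀ ε ∈ Icc (0:ℝ) 1, f 0 ε = 0 ∧ f x 0 = 0)
    (hε : ε ∈ Icc (0:ℝ) 1) : Monotone (fcl f ε) := fun a b hab =>
  f_monoL hf_maps hf_mono_x hf_zero hε (cl_mem a) (cl_mem b) (cl_monotone hab)

lemma gcl_monotone (hg_maps : MapsTo g (Icc (0:ℝ) 1) (Icc (0:ℝ) 1))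
    (hg_mono : StrictMonoOn g (Ioc (0:ℝ) 1)) (hg0 : g 0 = 0) : Monotone (gcl g) :=
  fun a b hab => g_monoOn hg_maps hg_mono hg0 (cl_mem a) (cl_mem b) (cl_monotone hab)

lemma hasDerivAt_Fc (hf_smooth : ContDiffOn ℝ 2 (fun p : ℝ × ℝ => f p.1 p.2)
      (Icc (0:ℝ) 1 ×ˢ Icc (0:ℝ) 1)) (hε : ε ∈ Icc (0:ℝ) 1) (y : ℝ) :
    HasDerivAt (Fc f ε) (fcl f ε y) y := by
  have hc := fcl_continuous hf_smooth hε
  exact intervalIntegral.integral_hasDerivAt_right (hc.intervalIntegrable _ _)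
    (hc.stronglyMeasurableAtFilter _ _) hc.continuousAt

lemma hasDerivAt_Gc (hg_smooth : ContDiffOn ℝ 2 g (Icc (0:ℝ) 1)) (y : ℝ) :
    HasDerivAt (Gc g) (gcl g y) y := by
  have hc := gcl_continuous hg_smooth
  exact intervalIntegral.integral_hasDerivAt_right (hc.intervalIntegrable _ _)
    (hc.stronglyMeasurableAtFilter _ _) hc.continuousAt

lemma Fc_eq_Ffun (hy : (0:ℝ) ≤ y) (hy1 : y ≤ 1) : Fc f ε y = Ffun f y ε := by
  refine intervalIntegral.integral_congr fun t ht => ?_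
  rw [uIcc_of_le hy] at ht
  exact fcl_eq ⟨ht.1, le_trans ht.2 hy1⟩

lemma Gc_eq_Gfun (hy : (0:ℝ) ≤ y) (hy1 : y ≤ 1) : Gc g y = Gfun g y := by
  refine intervalIntegral.integral_congr fun t ht => ?_
  rw [uIcc_of_le hy] at ht
  exact gcl_eq ⟨ht.1, le_trans ht.2 hy1⟩

lemma Fc_sub (hc : Continuous (fcl f ε)) (a b : ℝ) :
    Fc f ε b - Fc f ε a = ∫ t in a..b, fcl f ε t := by
  have := intervalIntegral.integral_add_adjacent_intervals
    (hc.intervalIntegrable (μ := MeasureTheory.volume) (0:ℝ) a) (hc.intervalIntegrable a b)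
  unfold Fc; rw [← this]; ring

lemma Gc_sub (hc : Continuous (gcl g)) (a b : ℝ) :
    Gc g b - Gc g a = ∫ t in a..b, gcl g t := by
  have := intervalIntegral.integral_add_adjacent_intervals
    (hc.intervalIntegrable (μ := MeasureTheory.volume) (0:ℝ) a) (hc.intervalIntegrable a b)
  unfold Gc; rw [← this]; ring

/-- lower bound `Fc b - Fc a ≥ (b-a) * fcl a` for monotone fcl -/
lemma Fc_lower (hc : Continuous (fcl f ε)) (hm : Monotone (fcl f ε)) {a b : ℝ} (hab : a ≤ b) :
    (b - a) * fcl f ε a ≤ Fc f ε b - Fc f ε a := by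
  rw [Fc_sub hc a b]
  have h1 : ∫ _t in a..b, fcl f ε a = (b - a) * fcl f ε a := by
    simp [intervalIntegral.integral_const, smul_eq_mul]
  rw [← h1]
  apply intervalIntegral.integral_mono_on hab (intervalIntegrable_const)
    (hc.intervalIntegrable a b)
  intro t ht; exact hm ht.1

/-- monotonicity of Fc -/
lemma Fc_mono (hc : Continuous (fcl f ε)) (hnn : ∀ y, 0 ≤ fcl f ε y) {a b : ℝ} (hab : a ≤ b) :
    Fc f ε a ≤ Fc f ε b := by
  have h := Fc_sub hc a b
  have h2 : 0 ≤ ∫ t in a..b, fcl f ε t :=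
    intervalIntegral.integral_nonneg hab fun t _ => hnn t
  linarith

lemma Gc_nonneg (hc : Continuous (gcl g)) (hnn : ∀ y, 0 ≤ gcl g y) {a : ℝ} (ha : 0 ≤ a) :
    0 ≤ Gc g a := by
  have h := Gc_sub hc 0 a
  have h0 : Gc g 0 = 0 := by simp [Gc]
  have h2 : 0 ≤ ∫ t in (0:ℝ)..a, gcl g t :=
    intervalIntegral.integral_nonneg ha fun t _ => hnn t
  linarith

lemma Fc_zero : Fc f ε 0 = 0 := by simp [Fc]

end Clamped

end TSaux

namespace TSaux

section Lip

variable {f : ℝ → ℝ → ℝ} {g : ℝ → ℝ} {ε : ℝ}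

/-- derivative of g within [0,1] -/
noncomputable def gd (g : ℝ → ℝ) : ℝ → ℝ := derivWithin g (Icc (0:ℝ) 1)

lemma hasDerivWithinAt_g (hg_smooth : ContDiffOn ℝ 2 g (Icc (0:ℝ) 1))
    {y : ℝ} (hy : y ∈ Icc (0:ℝ) 1) :
    HasDerivWithinAt g (gd g y) (Icc (0:ℝ) 1) y :=
  (hg_smooth.differentiableOn (by norm_num) y hy).hasDerivWithinAt

lemma exists_gd_bound (hg_smooth : ContDiffOn ℝ 2 g (Icc (0:ℝ) 1)) :
    ∃ B : ℝ, 0 ≤ B ∧ ∀ y ∈ Icc (0:ℝ) 1, |gd g y| ≤ B := by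
  have hcont : ContinuousOn (gd g) (Icc (0:ℝ) 1) :=
    hg_smooth.continuousOn_derivWithin (uniqueDiffOn_Icc (by norm_num)) (by norm_num)
  obtain ⟨B, hB⟩ := (isCompact_Icc).exists_bound_of_continuousOn hcont
  exact ⟨max B 0, le_max_right _ _, fun y hy =>
    le_trans (by simpa using hB y hy) (le_max_left _ _)⟩

/-- Lipschitz bound for g on [0,1] from the bound on gd -/
lemma g_lip (hg_smooth : ContDiffOn ℝ 2 g (Icc (0:ℝ) 1)) {B : ℝ}
    (hB : ∀ y ∈ Icc (0:ℝ) 1, |gd g y| ≤ B) {a b : ℝ}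
    (ha : a ∈ Icc (0:ℝ) 1) (hb : b ∈ Icc (0:ℝ) 1) :
    |g b - g a| ≤ B * |b - a| := by
  have := Convex.norm_image_sub_le_of_norm_hasDerivWithin_le
    (f := g) (f' := gd g) (C := B) (s := Icc (0:ℝ) 1)
    (fun y hy => hasDerivWithinAt_g hg_smooth hy)
    (fun y hy => by simpa using hB y hy) (convex_Icc _ _) ha hb
  simpa [Real.norm_eq_abs] using this

/-- slice of f at fixed ε is C² on [0,1] -/
lemma f_slice_smooth (hf_smooth : ContDiffOn ℝ 2 (fun p : ℝ × ℝ => f p.1 p.2)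
      (Icc (0:ℝ) 1 ×ˢ Icc (0:ℝ) 1)) (hε : ε ∈ Icc (0:ℝ) 1) :
    ContDiffOn ℝ 2 (fun y => f y ε) (Icc (0:ℝ) 1) := by
  have h1 : ContDiff ℝ 2 fun y : ℝ => ((y, ε) : ℝ × ℝ) :=
    (contDiff_id.prodMk contDiff_const)
  exact hf_smooth.comp h1.contDiffOn fun y hy => ⟨hy, hε⟩

lemma exists_f_lip (hf_smooth : ContDiffOn ℝ 2 (fun p : ℝ × ℝ => f p.1 p.2)
      (Icc (0:ℝ) 1 ×ˢ Icc (0:ℝ) 1)) (hε : ε ∈ Icc (0:ℝ) 1) :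
    ∃ B : ℝ, 0 ≤ B ∧ ∀ a ∈ Icc (0:ℝ) 1, ∀ b ∈ Icc (0:ℝ) 1,
      |f b ε - f a ε| ≤ B * |b - a| := by
  have hs := f_slice_smooth hf_smooth hε
  obtain ⟨B, hB0, hB⟩ := exists_gd_bound hs
  exact ⟨B, hB0, fun a ha b hb => g_lip hs hB ha hb⟩

lemma exists_g_lip (hg_smooth : ContDiffOn ℝ 2 g (Icc (0:ℝ) 1)) :
    ∃ B : ℝ, 0 ≤ B ∧ (∀ y ∈ Icc (0:ℝ) 1, |gd g y| ≤ B) ∧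
      ∀ a ∈ Icc (0:ℝ) 1, ∀ b ∈ Icc (0:ℝ) 1, |g b - g a| ≤ B * |b - a| := by
  obtain ⟨B, hB0, hB⟩ := exists_gd_bound hg_smooth
  exact ⟨B, hB0, hB, fun a ha b hb => g_lip hg_smooth hB ha hb⟩

end Lip

end TSaux

namespace TSaux

/-- bundled pointwise hypotheses at a fixed ε -/
structure Nice (f : ℝ → ℝ → ℝ) (g : ℝ → ℝ) (ε : ℝ) : Prop where
  heps : ε ∈ Icc (0:ℝ) 1
  fmem : ∀ x ∈ Icc (0:ℝ) 1, f x ε ∈ Icc (0:ℝ) 1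
  fmono : MonotoneOn (fun y => f y ε) (Icc (0:ℝ) 1)
  f0 : f 0 ε = 0
  gmem : ∀ x ∈ Icc (0:ℝ) 1, g x ∈ Icc (0:ℝ) 1
  gmono : MonotoneOn g (Icc (0:ℝ) 1)
  g0 : g 0 = 0

section System

variable (f : ℝ → ℝ → ℝ) (g : ℝ → ℝ) (ε : ℝ) (w : ℕ) (NN : ℤ)

noncomputable def Yz (z : ℤ → ℝ) (s : ℤ) : ℝ :=
  (1/(w:ℝ)) * ∑ j ∈ Finset.range w, g (z (s + (j:ℤ)))

noncomputable def Rz (z : ℤ → ℝ) (t : ℤ) : ℝ :=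
  (1/(w:ℝ)) * ∑ k ∈ Finset.range w, f (Yz g w z (t - (k:ℤ))) ε

noncomputable def auxT (z : ℤ → ℝ) : ℤ → ℝ :=
  fun i => if i < 0 then 0 else Rz f g ε w z (min i NN)

noncomputable def auxSeq : ℕ → ℤ → ℝ
  | 0 => fun i => if i < 0 then 0 else 1
  | n+1 => auxT f g ε w NN (auxSeq n)

noncomputable def auxZ : ℤ → ℝ := fun i => ⨅ n, auxSeq f g ε w NN n i

variable {f g ε w NN}

lemma avg_mem {w : ℕ} {a : ℤ → ℝ} (h : ∀ j, a j ∈ Icc (0:ℝ) 1) (t : ℤ) :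
    (1/(w:ℝ)) * ∑ j ∈ Finset.range w, a (t - (j:ℤ)) ∈ Icc (0:ℝ) 1 := by
  rcases Nat.eq_zero_or_pos w with rfl | hw
  · simp
  constructor
  · apply mul_nonneg (by positivity)
    exact Finset.sum_nonneg fun j _ => (h _).1
  · have hle : ∑ j ∈ Finset.range w, a (t - (j:ℤ)) ≤ (w:ℝ) := by
      calc ∑ j ∈ Finset.range w, a (t - (j:ℤ)) ≤ ∑ _j ∈ Finset.range w, (1:ℝ) :=
            Finset.sum_le_sum fun j _ => (h _).2
        _ = (w:ℝ) := by simp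
    rw [one_div]
    calc (w:ℝ)⁻¹ * ∑ j ∈ Finset.range w, a (t - (j:ℤ)) ≤ (w:ℝ)⁻¹ * (w:ℝ) :=
          mul_le_mul_of_nonneg_left hle (by positivity)
      _ = 1 := by field_simp

lemma avg_mem' {w : ℕ} {a : ℤ → ℝ} (h : ∀ j, a j ∈ Icc (0:ℝ) 1) (t : ℤ) :
    (1/(w:ℝ)) * ∑ j ∈ Finset.range w, a (t + (j:ℤ)) ∈ Icc (0:ℝ) 1 := by
  have := avg_mem (w := w) (a := fun j => a (2*t + (w:ℤ) - 1 - j)) (fun j => h _) (t + (w:ℤ) - 1)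
  -- simpler: direct proof
  rcases Nat.eq_zero_or_pos w with rfl | hw
  · simp
  constructor
  · apply mul_nonneg (by positivity)
    exact Finset.sum_nonneg fun j _ => (h _).1
  · have hle : ∑ j ∈ Finset.range w, a (t + (j:ℤ)) ≤ (w:ℝ) := by
      calc ∑ j ∈ Finset.range w, a (t + (j:ℤ)) ≤ ∑ _j ∈ Finset.range w, (1:ℝ) :=
            Finset.sum_le_sum fun j _ => (h _).2
        _ = (w:ℝ) := by simp
    rw [one_div]
    calc (w:ℝ)⁻¹ * ∑ j ∈ Finset.range w, a (t + (j:ℤ)) ≤ (w:ℝ)⁻¹ * (w:ℝ) :=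
          mul_le_mul_of_nonneg_left hle (by positivity)
      _ = 1 := by field_simp

lemma Yz_mem (hn : Nice f g ε) {z : ℤ → ℝ} (hz : ∀ i, z i ∈ Icc (0:ℝ) 1) (s : ℤ) :
    Yz g w z s ∈ Icc (0:ℝ) 1 :=
  avg_mem' (fun j => hn.gmem _ (hz j)) s

lemma Rz_mem (hn : Nice f g ε) {z : ℤ → ℝ} (hz : ∀ i, z i ∈ Icc (0:ℝ) 1) (t : ℤ) :
    Rz f g ε w z t ∈ Icc (0:ℝ) 1 :=
  avg_mem (fun s => hn.fmem _ (Yz_mem hn hz s)) t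

lemma Yz_mono_z (hn : Nice f g ε) {z z' : ℤ → ℝ} (hz : ∀ i, z i ∈ Icc (0:ℝ) 1)
    (hz' : ∀ i, z' i ∈ Icc (0:ℝ) 1) (hle : ∀ i, z i ≤ z' i) (s : ℤ) :
    Yz g w z s ≤ Yz g w z' s := by
  unfold Yz
  apply mul_le_mul_of_nonneg_left _ (by positivity)
  exact Finset.sum_le_sum fun j _ => hn.gmono (hz _) (hz' _) (hle _)

lemma Rz_mono_z (hn : Nice f g ε) {z z' : ℤ → ℝ} (hz : ∀ i, z i ∈ Icc (0:ℝ) 1)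
    (hz' : ∀ i, z' i ∈ Icc (0:ℝ) 1) (hle : ∀ i, z i ≤ z' i) (t : ℤ) :
    Rz f g ε w z t ≤ Rz f g ε w z' t := by
  unfold Rz
  apply mul_le_mul_of_nonneg_left _ (by positivity)
  exact Finset.sum_le_sum fun k _ => hn.fmono (Yz_mem hn hz _) (Yz_mem hn hz' _)
    (Yz_mono_z hn hz hz' hle _)

lemma Yz_mono_s (hn : Nice f g ε) {z : ℤ → ℝ} (hz : ∀ i, z i ∈ Icc (0:ℝ) 1)
    (hmono : Monotone z) {s s' : ℤ} (hs : s ≤ s') :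
    Yz g w z s ≤ Yz g w z s' := by
  unfold Yz
  apply mul_le_mul_of_nonneg_left _ (by positivity)
  exact Finset.sum_le_sum fun j _ => hn.gmono (hz _) (hz _) (hmono (by omega))

lemma Rz_mono_t (hn : Nice f g ε) {z : ℤ → ℝ} (hz : ∀ i, z i ∈ Icc (0:ℝ) 1)
    (hmono : Monotone z) {t t' : ℤ} (ht : t ≤ t') :
    Rz f g ε w z t ≤ Rz f g ε w z t' := by
  unfold Rz
  apply mul_le_mul_of_nonneg_left _ (by positivity)
  exact Finset.sum_le_sum fun k _ => hn.fmono (Yz_mem hn hz _) (Yz_mem hn hz _)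
    (Yz_mono_s hn hz hmono (by omega))

/-- invariants of the iteration -/
lemma auxSeq_mem (hn : Nice f g ε) (n : ℕ) (i : ℤ) :
    auxSeq f g ε w NN n i ∈ Icc (0:ℝ) 1 := by
  induction n generalizing i with
  | zero => by_cases h : i < 0 <;> simp [auxSeq, h]
  | succ n ih =>
      show auxT f g ε w NN (auxSeq f g ε w NN n) i ∈ Icc (0:ℝ) 1
      unfold auxT
      by_cases h : i < 0
      · simp [h]
      · simp only [h, if_false]
        exact Rz_mem hn ih _

lemma auxSeq_neg (n : ℕ) {i : ℤ} (hi : i < 0) : auxSeq f g ε w NN n i = 0 := by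
  cases n with
  | zero => simp [auxSeq, hi]
  | succ n => simp [auxSeq, auxT, hi]

lemma auxSeq_monotone (hn : Nice f g ε) (hNN : 0 ≤ NN) (n : ℕ) :
    Monotone (auxSeq f g ε w NN n) := by
  induction n with
  | zero =>
      intro a b hab
      by_cases ha : a < 0 <;> by_cases hb : b < 0 <;> simp [auxSeq, ha, hb] <;> omega
  | succ n ih =>
      intro a b hab
      show auxT f g ε w NN (auxSeq f g ε w NN n) a ≤ auxT f g ε w NN (auxSeq f g ε w NN n) b
      unfold auxT
      by_cases ha : a < 0
      · by_cases hb : b < 0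
        · simp [ha, hb]
        · simp only [ha, if_true, hb, if_false]
          exact (Rz_mem hn (auxSeq_mem hn n) _).1
      · have hb : ¬ b < 0 := by omega
        simp only [ha, hb, if_false]
        exact Rz_mono_t hn (auxSeq_mem hn n) ih (by omega)

lemma auxSeq_antitone (hn : Nice f g ε) (hNN : 0 ≤ NN) :
    ∀ n i, auxSeq f g ε w NN (n+1) i ≤ auxSeq f g ε w NN n i := by
  intro n
  induction n with
  | zero =>
      intro i
      by_cases h : i < 0
      · simp [auxSeq, auxT, h]
      · have h1 : auxSeq f g ε w NN 0 i = 1 := by simp [auxSeq, h]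
        show auxT f g ε w NN (auxSeq f g ε w NN 0) i ≤ auxSeq f g ε w NN 0 i
        rw [h1]
        simp only [auxT, h, if_false]
        exact (Rz_mem hn (auxSeq_mem hn 0) _).2
  | succ n ih =>
      intro i
      show auxT f g ε w NN (auxSeq f g ε w NN (n+1)) i ≤
        auxT f g ε w NN (auxSeq f g ε w NN n) i
      unfold auxT
      by_cases h : i < 0
      · simp [h]
      · simp only [h, if_false]
        exact Rz_mono_z hn (auxSeq_mem hn (n+1)) (auxSeq_mem hn n) ih _

lemma auxSeq_anti (hn : Nice f g ε) (hNN : 0 ≤ NN) (i : ℤ) :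
    Antitone fun n => auxSeq f g ε w NN n i :=
  antitone_nat_of_succ_le fun n => auxSeq_antitone hn hNN n i

lemma auxZ_mem (hn : Nice f g ε) (hNN : 0 ≤ NN) (i : ℤ) :
    auxZ f g ε w NN i ∈ Icc (0:ℝ) 1 := by
  constructor
  · exact le_ciInf fun n => (auxSeq_mem hn n i).1
  · exact le_trans (ciInf_le ⟨0, fun v hv => by
      obtain ⟨n, rfl⟩ := hv; exact (auxSeq_mem hn n i).1⟩ 0) (auxSeq_mem hn 0 i).2

lemma auxZ_tendsto (hn : Nice f g ε) (hNN : 0 ≤ NN) (i : ℤ) :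
    Filter.Tendsto (fun n => auxSeq f g ε w NN n i) Filter.atTop
      (nhds (auxZ f g ε w NN i)) := by
  apply tendsto_atTop_ciInf (auxSeq_anti hn hNN i)
  exact ⟨0, fun v hv => by obtain ⟨n, rfl⟩ := hv; exact (auxSeq_mem hn n i).1⟩

lemma auxZ_monotone (hn : Nice f g ε) (hNN : 0 ≤ NN) :
    Monotone (auxZ f g ε w NN) := by
  intro a b hab
  apply le_ciInf fun n => ?_
  exact le_trans (ciInf_le ⟨0, fun v hv => by
    obtain ⟨k, rfl⟩ := hv; exact (auxSeq_mem hn k a).1⟩ n)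
    (auxSeq_monotone hn hNN n hab)

lemma auxZ_neg (hn : Nice f g ε) {i : ℤ} (hi : i < 0) : auxZ f g ε w NN i = 0 := by
  unfold auxZ
  have : ∀ n, auxSeq f g ε w NN n i = 0 := fun n => auxSeq_neg n hi
  simp [this]

end System

end TSaux

namespace TSaux

section Fixed

variable {f : ℝ → ℝ → ℝ} {g : ℝ → ℝ} {ε : ℝ} {w : ℕ} {NN : ℤ}

lemma Rz_clamped (hn : Nice f g ε) {z : ℤ → ℝ} (hz : ∀ i, z i ∈ Icc (0:ℝ) 1) (t : ℤ) :
    Rz f g ε w z t = (1/(w:ℝ)) * ∑ k ∈ Finset.range w,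
      fcl f ε ((1/(w:ℝ)) * ∑ j ∈ Finset.range w, gcl g (z (t - (k:ℤ) + (j:ℤ)))) := by
  unfold Rz
  congr 1
  apply Finset.sum_congr rfl
  intro k _
  have hYmem : Yz g w z (t - (k:ℤ)) ∈ Icc (0:ℝ) 1 := Yz_mem hn hz _
  rw [show f (Yz g w z (t - (k:ℤ))) ε = fcl f ε (Yz g w z (t - (k:ℤ))) from (fcl_eq hYmem).symm]
  congr 1
  unfold Yz
  congr 1
  apply Finset.sum_congr rfl
  intro j _
  exact (gcl_eq (hz _)).symm

lemma auxZ_fix (hn : Nice f g ε) (hNN : 0 ≤ NN)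
    (hf_smooth : ContDiffOn ℝ 2 (fun p : ℝ × ℝ => f p.1 p.2)
      (Icc (0:ℝ) 1 ×ˢ Icc (0:ℝ) 1))
    (hg_smooth : ContDiffOn ℝ 2 g (Icc (0:ℝ) 1))
    {i : ℤ} (hi : 0 ≤ i) :
    auxZ f g ε w NN i = Rz f g ε w (auxZ f g ε w NN) (min i NN) := by
  have hgc := gcl_continuous hg_smooth
  have hfc := fcl_continuous hf_smooth hn.heps
  set t := min i NN with ht
  have hZmem : ∀ j, auxZ f g ε w NN j ∈ Icc (0:ℝ) 1 := auxZ_mem hn hNN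
  have hSmem : ∀ n j, auxSeq f g ε w NN n j ∈ Icc (0:ℝ) 1 := fun n => auxSeq_mem hn n
  have hcoord : ∀ s : ℤ, Filter.Tendsto (fun n => auxSeq f g ε w NN n s)
      Filter.atTop (nhds (auxZ f g ε w NN s)) := auxZ_tendsto hn hNN
  -- convergence of the clamped recursion value
  have hR : Filter.Tendsto (fun n => Rz f g ε w (auxSeq f g ε w NN n) t)
      Filter.atTop (nhds (Rz f g ε w (auxZ f g ε w NN) t)) := by
    have hfun : ∀ n, Rz f g ε w (auxSeq f g ε w NN n) t
        = (1/(w:ℝ)) * ∑ k ∈ Finset.range w,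
          fcl f ε ((1/(w:ℝ)) * ∑ j ∈ Finset.range w,
            gcl g (auxSeq f g ε w NN n (t - (k:ℤ) + (j:ℤ)))) :=
      fun n => Rz_clamped hn (hSmem n) t
    rw [Rz_clamped hn hZmem t]
    simp only [hfun]
    apply Filter.Tendsto.const_mul
    apply tendsto_finset_sum
    intro k _
    apply hfc.continuousAt.tendsto.comp
    apply Filter.Tendsto.const_mul
    apply tendsto_finset_sum
    intro j _
    exact hgc.continuousAt.tendsto.comp (hcoord _)
  have hL : Filter.Tendsto (fun n => auxSeq f g ε w NN (n+1) i)
      Filter.atTop (nhds (auxZ f g ε w NN i)) :=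
    (hcoord i).comp (Filter.tendsto_add_atTop_nat 1)
  have heq : ∀ n, auxSeq f g ε w NN (n+1) i
      = Rz f g ε w (auxSeq f g ε w NN n) t := by
    intro n
    show auxT f g ε w NN (auxSeq f g ε w NN n) i = _
    rw [ht]
    simp only [auxT, not_lt.mpr hi, if_false]
  simp only [heq] at hL
  exact tendsto_nhds_unique hL hR

lemma auxZ_fix' (hn : Nice f g ε) (hNN : 0 ≤ NN)
    (hf_smooth : ContDiffOn ℝ 2 (fun p : ℝ × ℝ => f p.1 p.2)
      (Icc (0:ℝ) 1 ×ˢ Icc (0:ℝ) 1))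
    (hg_smooth : ContDiffOn ℝ 2 g (Icc (0:ℝ) 1))
    {i : ℤ} (hi : 0 ≤ i) (hi' : i ≤ NN) :
    auxZ f g ε w NN i = Rz f g ε w (auxZ f g ε w NN) i := by
  have := auxZ_fix (w := w) hn hNN hf_smooth hg_smooth hi
  rwa [min_eq_left hi'] at this

lemma auxZ_pinned (hn : Nice f g ε) (hNN : 0 ≤ NN)
    (hf_smooth : ContDiffOn ℝ 2 (fun p : ℝ × ℝ => f p.1 p.2)
      (Icc (0:ℝ) 1 ×ˢ Icc (0:ℝ) 1))
    (hg_smooth : ContDiffOn ℝ 2 g (Icc (0:ℝ) 1))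
    {i : ℤ} (hi : NN ≤ i) :
    auxZ f g ε w NN i = auxZ f g ε w NN NN := by
  have h1 := auxZ_fix (w := w) hn hNN hf_smooth hg_smooth (le_trans hNN hi)
  have h2 := auxZ_fix (w := w) hn hNN hf_smooth hg_smooth hNN
  rw [min_eq_right hi] at h1
  rw [min_self] at h2
  rw [h1, ← h2]

end Fixed

end TSaux

namespace TSaux

section Dominate

variable {f : ℝ → ℝ → ℝ} {g : ℝ → ℝ} {ε : ℝ} {w : ℕ} {NN : ℤ}

lemma dominates (hn : Nice f g ε) (hNN : 0 ≤ NN) {x : ℤ → ℝ}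
    (hx_mem : ∀ t, x t ∈ Icc (0:ℝ) 1)
    (hx_out : ∀ t : ℤ, t ∉ Icc (1:ℤ) NN → x t = 0)
    (hx_fix : ∀ t ∈ Icc (1:ℤ) NN, x t = Rz f g ε w x t) (i : ℤ) :
    x (i+1) ≤ auxZ f g ε w NN i := by
  have main : ∀ n : ℕ, ∀ i : ℤ, x (i+1) ≤ auxSeq f g ε w NN n i := by
    intro n
    induction n with
    | zero =>
        intro i
        by_cases h : i < 0
        · have : x (i+1) = 0 := hx_out _ (by simp only [mem_Icc]; omega)
          simp [auxSeq, h, this]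
        · simp only [auxSeq, h, if_false]
          exact (hx_mem _).2
    | succ n ih =>
        intro i
        show x (i+1) ≤ auxT f g ε w NN (auxSeq f g ε w NN n) i
        unfold auxT
        by_cases h : i < 0
        · have : x (i+1) = 0 := hx_out _ (by simp only [mem_Icc]; omega)
          simp [h, this]
        · simp only [h, if_false]
          by_cases h2 : i + 1 ∈ Icc (1:ℤ) NN
          · have hmin : min i NN = i := by
              simp only [mem_Icc] at h2; omega
            rw [hmin, hx_fix _ h2]
            unfold Rz
            apply mul_le_mul_of_nonneg_left _ (by positivity)
            apply Finset.sum_le_sum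
            intro k _
            apply hn.fmono (Yz_mem hn hx_mem _) (Yz_mem hn (auxSeq_mem hn n) _)
            unfold Yz
            apply mul_le_mul_of_nonneg_left _ (by positivity)
            apply Finset.sum_le_sum
            intro j _
            have harg : i + 1 - (k:ℤ) + (j:ℤ) = (i - (k:ℤ) + (j:ℤ)) + 1 := by ring
            rw [harg]
            exact hn.gmono (hx_mem _) (auxSeq_mem hn n _) (ih _)
          · have : x (i+1) = 0 := hx_out _ h2
            rw [this]
            exact (Rz_mem hn (auxSeq_mem hn n) _).1
  exact le_ciInf fun n => main n i

end Dominate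

end TSaux

namespace TSaux

section Potential

variable {f : ℝ → ℝ → ℝ} {g : ℝ → ℝ} {ε : ℝ} {w : ℕ} {NN : ℤ}

/-- padded right-shift -/
noncomputable def Sh (z : ℤ → ℝ) : ℤ → ℝ := fun i => if 1 ≤ i then z (i-1) else z i

/-- interpolation between z and Sh z -/
noncomputable def vv (z : ℤ → ℝ) (s : ℝ) : ℤ → ℝ := fun i => z i + s * (Sh z i - z i)

/-- the coupled potential along the interpolation path -/
noncomputable def phi (f : ℝ → ℝ → ℝ) (g : ℝ → ℝ) (ε : ℝ) (w : ℕ) (NN : ℤ)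
    (z : ℤ → ℝ) : ℝ → ℝ := fun s =>
  (∑ i ∈ Finset.Icc (0:ℤ) NN, (vv z s i * g (vv z s i) - Gc g (vv z s i)))
  - ∑ i ∈ Finset.Icc (1-(w:ℤ)) NN, Fc f ε (Yz g w (vv z s) i)

lemma vv_zero (z : ℤ → ℝ) (i : ℤ) : vv z 0 i = z i := by simp [vv]

lemma vv_one (z : ℤ → ℝ) (i : ℤ) : vv z 1 i = Sh z i := by simp [vv]

lemma Sh_mem {z : ℤ → ℝ} (hz : ∀ i, z i ∈ Icc (0:ℝ) 1) (i : ℤ) :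
    Sh z i ∈ Icc (0:ℝ) 1 := by
  unfold Sh; by_cases h : 1 ≤ i <;> simp [h] <;> exact ⟨(hz _).1, (hz _).2⟩

section Exact

variable {z : ℤ → ℝ}

lemma exact_side (hn : Nice f g ε)
    (hfc : Continuous (fcl f ε)) (hfm : Monotone (fcl f ε))
    (hgc : Continuous (gcl g))
    (hw : 1 ≤ w) (hNN : 1 ≤ NN)
    (hz_mem : ∀ i, z i ∈ Icc (0:ℝ) 1)
    (hz_neg : ∀ i : ℤ, i < 0 → z i = 0)
    (hz_pin : ∀ i : ℤ, NN ≤ i → z i = z NN)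
    (hz_fix0 : z 0 = Rz f g ε w z 0) :
    phi f g ε w NN z 1 - phi f g ε w NN z 0 ≤
      -(z NN * g (z NN) - Gc g (z NN) - Fc f ε (g (z NN))) + 1/(w:ℝ) := by
  have hwR : (0:ℝ) < (w:ℝ) := by exact_mod_cast Nat.pos_of_ne_zero (by omega)
  set h : ℝ → ℝ := fun t => t * g t - Gc g t with hh
  -- the h-part
  have hsplit0 : Finset.Icc (0:ℤ) NN = insert 0 (Finset.Icc (1:ℤ) NN) := by
    ext a; simp only [Finset.mem_Icc, Finset.mem_insert]; omega
  have hsplitN : Finset.Icc (0:ℤ) NN = insert NN (Finset.Icc (0:ℤ) (NN-1)) := by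
    ext a; simp only [Finset.mem_Icc, Finset.mem_insert]; omega
  have hA : ∑ i ∈ Finset.Icc (0:ℤ) NN, h (Sh z i)
      = ∑ i ∈ Finset.Icc (0:ℤ) NN, h (z i) + h (z 0) - h (z NN) := by
    have h1 : ∑ i ∈ Finset.Icc (0:ℤ) NN, h (Sh z i)
        = h (z 0) + ∑ i ∈ Finset.Icc (1:ℤ) NN, h (z (i-1)) := by
      rw [hsplit0, Finset.sum_insert (by simp)]
      have e0 : Sh z 0 = z 0 := by unfold Sh; norm_num
      rw [e0]
      congr 1
      apply Finset.sum_congr rfl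
      intro i hi
      simp only [Finset.mem_Icc] at hi
      have : Sh z i = z (i-1) := if_pos hi.1
      rw [this]
    have h2 : ∑ i ∈ Finset.Icc (1:ℤ) NN, h (z (i-1))
        = ∑ i ∈ Finset.Icc (0:ℤ) (NN-1), h (z i) := by
      rw [sum_Icc_shift_down (fun l => h (z l)) 1 NN]
      congr 1 <;> ring
    have h3 : ∑ i ∈ Finset.Icc (0:ℤ) NN, h (z i)
        = h (z NN) + ∑ i ∈ Finset.Icc (0:ℤ) (NN-1), h (z i) := by
      rw [hsplitN, Finset.sum_insert (by simp)]
    rw [h1, h2]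
    linarith [h3]
  -- decomposition of shifted Y
  have hgS : ∀ l : ℤ, g (Sh z l) = g (z (l-1)) + (if l = 0 then g (z 0) else 0) := by
    intro l
    unfold Sh
    by_cases h1 : 1 ≤ l
    · rw [if_pos h1, if_neg (by omega)]; ring
    · rw [if_neg h1]
      by_cases h2 : l = 0
      · subst h2
        rw [if_pos rfl]
        rw [show (0:ℤ) - 1 = -1 by ring, hz_neg (-1) (by norm_num), hn.g0]
        ring
      · rw [if_neg h2, hz_neg l (by omega), hz_neg (l-1) (by omega)]
        ring
  have hYS : ∀ i : ℤ, Yz g w (Sh z) i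
      = Yz g w z (i-1) + (if 1-(w:ℤ) ≤ i ∧ i ≤ 0 then g (z 0) * (1/(w:ℝ)) else 0) := by
    intro i
    unfold Yz
    have hterm : ∀ j ∈ Finset.range w, g (Sh z (i + (j:ℤ)))
        = g (z ((i-1) + (j:ℤ))) + (if i + (j:ℤ) = 0 then g (z 0) else 0) := by
      intro j _
      rw [hgS (i + (j:ℤ)), show i + (j:ℤ) - 1 = (i-1) + (j:ℤ) from by ring]
    rw [Finset.sum_congr rfl hterm, Finset.sum_add_distrib]
    have hite : ∑ j ∈ Finset.range w, (if i + (j:ℤ) = 0 then g (z 0) else 0)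
        = if 1-(w:ℤ) ≤ i ∧ i ≤ 0 then g (z 0) else 0 := by
      by_cases hc : 1-(w:ℤ) ≤ i ∧ i ≤ 0
      · rw [if_pos hc]
        rw [Finset.sum_eq_single_of_mem (-i).toNat]
        · rw [if_pos (by omega)]
        · simp only [Finset.mem_range]; omega
        · intro j _ hj
          rw [if_neg (by omega)]
      · rw [if_neg hc]
        apply Finset.sum_eq_zero
        intro j hj
        simp only [Finset.mem_range] at hj
        rw [if_neg (by omega)]
    rw [hite, mul_add]
    have h2 : (1/(w:ℝ)) * (if 1-(w:ℤ) ≤ i ∧ i ≤ 0 then g (z 0) else 0)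
        = (if 1-(w:ℤ) ≤ i ∧ i ≤ 0 then g (z 0) * (1/(w:ℝ)) else 0) := by
      split_ifs <;> ring
    rw [h2]
  -- key F values
  have hYz_mem : ∀ i : ℤ, Yz g w z i ∈ Icc (0:ℝ) 1 := Yz_mem hn hz_mem
  have hYneg : Yz g w z (-(w:ℤ)) = 0 := by
    unfold Yz
    have : ∀ j ∈ Finset.range w, g (z (-(w:ℤ) + (j:ℤ))) = 0 := by
      intro j hj
      simp only [Finset.mem_range] at hj
      rw [hz_neg _ (by omega), hn.g0]
    rw [Finset.sum_congr rfl this]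
    simp
  have hYNN : Yz g w z NN = g (z NN) := by
    unfold Yz
    have : ∀ j ∈ Finset.range w, g (z (NN + (j:ℤ))) = g (z NN) := by
      intro j _
      rw [hz_pin _ (by omega)]
    rw [Finset.sum_congr rfl this, Finset.sum_const, Finset.card_range, nsmul_eq_mul]
    field_simp
  have hFP0 : ∑ i ∈ Finset.Icc (1-(w:ℤ)) 0, fcl f ε (Yz g w z i) = (w:ℝ) * z 0 := by
    have h1 : z 0 = (1/(w:ℝ)) * ∑ k ∈ Finset.range w, f (Yz g w z (0 - (k:ℤ))) ε := hz_fix0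
    have h2 : ∑ k ∈ Finset.range w, f (Yz g w z (0 - (k:ℤ))) ε
        = ∑ i ∈ Finset.Icc (1-(w:ℤ)) 0, fcl f ε (Yz g w z i) := by
      rw [sum_range_sub (fun l => f (Yz g w z l) ε) 0 w]
      have he : (0:ℤ) - (w:ℤ) + 1 = 1 - (w:ℤ) := by ring
      rw [he]
      apply Finset.sum_congr rfl
      intro i _
      rw [fcl_eq (hYz_mem i)]
    rw [h2] at h1
    rw [h1]; field_simp
  -- the B-sum inequality
  set B := Finset.Icc (1-(w:ℤ)) NN with hB
  have hBsplit : B = Finset.Icc (1-(w:ℤ)) 0 ∪ Finset.Icc (1:ℤ) NN := by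
    ext a; simp only [hB, Finset.mem_Icc, Finset.mem_union]; omega
  have hBdisj : Disjoint (Finset.Icc (1-(w:ℤ)) 0) (Finset.Icc (1:ℤ) NN) := by
    rw [Finset.disjoint_left]
    intro a ha hb
    simp only [Finset.mem_Icc] at ha hb
    omega
  have hshiftB : ∑ i ∈ B, Fc f ε (Yz g w z (i-1))
      = ∑ i ∈ B, Fc f ε (Yz g w z i) - Fc f ε (g (z NN)) := by
    have h1 : ∑ i ∈ B, Fc f ε (Yz g w z (i-1))
        = ∑ i ∈ Finset.Icc (-(w:ℤ)) (NN-1), Fc f ε (Yz g w z i) := by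
      rw [hB, sum_Icc_shift_down (fun l => Fc f ε (Yz g w z l)) (1-(w:ℤ)) NN]
      congr 1
      ring
    have hmid1 : Finset.Icc (-(w:ℤ)) (NN-1) = insert (-(w:ℤ)) (Finset.Icc (1-(w:ℤ)) (NN-1)) := by
      ext a; simp only [Finset.mem_Icc, Finset.mem_insert]; omega
    have hmid2 : B = insert NN (Finset.Icc (1-(w:ℤ)) (NN-1)) := by
      ext a; simp only [hB, Finset.mem_Icc, Finset.mem_insert]; omega
    rw [h1, hmid1, Finset.sum_insert (by simp only [Finset.mem_Icc]; omega),
      hYneg, Fc_zero, hmid2, Finset.sum_insert (by simp only [Finset.mem_Icc]; omega), hYNN]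
    ring
  have hcorr : ∑ i ∈ Finset.Icc (1-(w:ℤ)) 0, fcl f ε (Yz g w z (i-1))
      = (w:ℝ) * z 0 - fcl f ε (Yz g w z 0) := by
    have h1 : ∑ i ∈ Finset.Icc (1-(w:ℤ)) 0, fcl f ε (Yz g w z (i-1))
        = ∑ i ∈ Finset.Icc (-(w:ℤ)) (-1:ℤ), fcl f ε (Yz g w z i) := by
      rw [sum_Icc_shift_down (fun l => fcl f ε (Yz g w z l)) (1-(w:ℤ)) 0]
      congr 1
      ring
    have hmid1 : Finset.Icc (-(w:ℤ)) (-1:ℤ) = insert (-(w:ℤ)) (Finset.Icc (1-(w:ℤ)) (-1:ℤ)) := by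
      ext a; simp only [Finset.mem_Icc, Finset.mem_insert]; omega
    have hmid2 : Finset.Icc (1-(w:ℤ)) (0:ℤ) = insert (0:ℤ) (Finset.Icc (1-(w:ℤ)) (-1:ℤ)) := by
      ext a; simp only [Finset.mem_Icc, Finset.mem_insert]; omega
    have hf0 : fcl f ε (Yz g w z (-(w:ℤ))) = 0 := by
      rw [hYneg, fcl, cl_eq (by constructor <;> norm_num), hn.f0]
    rw [h1, hmid1, Finset.sum_insert (by simp only [Finset.mem_Icc]; omega), hf0]
    have := hFP0
    rw [hmid2, Finset.sum_insert (by simp only [Finset.mem_Icc]; omega)] at this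
    linarith
  -- per-term inequalities on B
  have hg0pos : 0 ≤ g (z 0) := (hn.gmem _ (hz_mem 0)).1
  have hterm_ge : ∀ i ∈ B, Fc f ε (Yz g w (Sh z) i) ≥ Fc f ε (Yz g w z (i-1))
      + (if 1-(w:ℤ) ≤ i ∧ i ≤ 0 then (g (z 0) * (1/(w:ℝ))) * fcl f ε (Yz g w z (i-1)) else 0) := by
    intro i hi
    rw [hYS i]
    by_cases hc : 1-(w:ℤ) ≤ i ∧ i ≤ 0
    · rw [if_pos hc, if_pos hc]
      have hδ : 0 ≤ g (z 0) * (1/(w:ℝ)) := by positivity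
      have := Fc_lower (f := f) (ε := ε) hfc hfm
        (a := Yz g w z (i-1)) (b := Yz g w z (i-1) + g (z 0) * (1/(w:ℝ))) (by linarith)
      have heq : Yz g w z (i-1) + g (z 0) * (1/(w:ℝ)) - Yz g w z (i-1)
          = g (z 0) * (1/(w:ℝ)) := by ring
      rw [heq] at this
      rw [fcl_eq (hYz_mem (i-1))] at this ⊢
      linarith
    · rw [if_neg hc, if_neg hc]
      simp
  have hBsum : ∑ i ∈ B, Fc f ε (Yz g w (Sh z) i)
      ≥ ∑ i ∈ B, Fc f ε (Yz g w z (i-1))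
        + (g (z 0) * (1/(w:ℝ))) * ((w:ℝ) * z 0 - fcl f ε (Yz g w z 0)) := by
    have h1 : ∑ i ∈ B, Fc f ε (Yz g w (Sh z) i)
        ≥ ∑ i ∈ B, (Fc f ε (Yz g w z (i-1))
          + (if 1-(w:ℤ) ≤ i ∧ i ≤ 0 then (g (z 0) * (1/(w:ℝ))) * fcl f ε (Yz g w z (i-1)) else 0)) :=
      Finset.sum_le_sum hterm_ge
    rw [Finset.sum_add_distrib] at h1
    have h2 : ∑ i ∈ B, (if 1-(w:ℤ) ≤ i ∧ i ≤ 0 then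
        (g (z 0) * (1/(w:ℝ))) * fcl f ε (Yz g w z (i-1)) else 0)
        = (g (z 0) * (1/(w:ℝ))) * ∑ i ∈ Finset.Icc (1-(w:ℤ)) 0, fcl f ε (Yz g w z (i-1)) := by
      rw [hBsplit, Finset.sum_union hBdisj]
      have ha : ∑ i ∈ Finset.Icc (1-(w:ℤ)) 0, (if 1-(w:ℤ) ≤ i ∧ i ≤ 0 then
          (g (z 0) * (1/(w:ℝ))) * fcl f ε (Yz g w z (i-1)) else 0)
          = ∑ i ∈ Finset.Icc (1-(w:ℤ)) 0, (g (z 0) * (1/(w:ℝ))) * fcl f ε (Yz g w z (i-1)) := by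
        apply Finset.sum_congr rfl
        intro i hi
        simp only [Finset.mem_Icc] at hi
        rw [if_pos hi]
      have hb : ∑ i ∈ Finset.Icc (1:ℤ) NN, (if 1-(w:ℤ) ≤ i ∧ i ≤ 0 then
          (g (z 0) * (1/(w:ℝ))) * fcl f ε (Yz g w z (i-1)) else 0) = 0 := by
        apply Finset.sum_eq_zero
        intro i hi
        simp only [Finset.mem_Icc] at hi
        rw [if_neg (by omega)]
      rw [ha, hb, Finset.mul_sum]
      ring
    rw [h2, hcorr] at h1
    linarith
  -- assemble
  have hphi1 : phi f g ε w NN z 1 = (∑ i ∈ Finset.Icc (0:ℤ) NN, h (Sh z i))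
      - ∑ i ∈ B, Fc f ε (Yz g w (Sh z) i) := by
    unfold phi
    congr 1
    · apply Finset.sum_congr rfl; intro i _; rw [hh]; simp only [vv_one]
    · apply Finset.sum_congr rfl
      intro i _
      congr 1
      unfold Yz
      congr 1
      apply Finset.sum_congr rfl
      intro j _
      rw [vv_one]
  have hphi0 : phi f g ε w NN z 0 = (∑ i ∈ Finset.Icc (0:ℤ) NN, h (z i))
      - ∑ i ∈ B, Fc f ε (Yz g w z i) := by
    unfold phi
    congr 1
    · apply Finset.sum_congr rfl; intro i _; rw [hh]; simp only [vv_zero]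
    · apply Finset.sum_congr rfl
      intro i _
      congr 1
      unfold Yz
      congr 1
      apply Finset.sum_congr rfl
      intro j _
      rw [vv_zero]
  have hGc0 : 0 ≤ Gc g (z 0) :=
    Gc_nonneg hgc (fun y => (hn.gmem _ (cl_mem y)).1) (hz_mem 0).1
  have hfY0mem : fcl f ε (Yz g w z 0) ∈ Icc (0:ℝ) 1 := hn.fmem _ (cl_mem _)
  have hgz0 : g (z 0) ∈ Icc (0:ℝ) 1 := hn.gmem _ (hz_mem 0)
  have hprod : g (z 0) * fcl f ε (Yz g w z 0) ≤ 1 :=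
    mul_le_one₀ hgz0.2 hfY0mem.1 hfY0mem.2
  have h1w : (0:ℝ) < 1/(w:ℝ) := by positivity
  have hBish : ∑ i ∈ B, Fc f ε (Yz g w (Sh z) i)
      ≥ ∑ i ∈ B, Fc f ε (Yz g w z i) - Fc f ε (g (z NN))
        + (g (z 0) * (1/(w:ℝ))) * ((w:ℝ) * z 0 - fcl f ε (Yz g w z 0)) := by
    have hx := hBsum; rw [hshiftB] at hx; linarith
  rw [hphi1, hphi0]
  have hexp : (g (z 0) * (1/(w:ℝ))) * ((w:ℝ) * z 0 - fcl f ε (Yz g w z 0))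
      = g (z 0) * z 0 - (g (z 0) * fcl f ε (Yz g w z 0)) * (1/(w:ℝ)) := by
    field_simp
  have hineq : (g (z 0) * fcl f ε (Yz g w z 0)) * (1/(w:ℝ)) ≤ 1 * (1/(w:ℝ)) :=
    mul_le_mul_of_nonneg_right hprod (le_of_lt h1w)
  have hhz0 : h (z 0) = z 0 * g (z 0) - Gc g (z 0) := by rw [hh]
  have hhzN : h (z NN) = z NN * g (z NN) - Gc g (z NN) := by rw [hh]
  rw [hexp] at hBish
  have hz0g : z 0 * g (z 0) = g (z 0) * z 0 := by ring
  linarith [hA, hBish, hGc0, hineq]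

end Exact

end Potential

end TSaux

namespace TSaux

/-- double-sum window swap -/
lemma swap_sum {w : ℕ} {NN : ℤ} (hw : 1 ≤ w) (hNN : 1 ≤ NN)
    (F c : ℤ → ℝ) (hc : ∀ l : ℤ, l < 1 ∨ NN < l → c l = 0) :
    ∑ i ∈ Finset.Icc (1-(w:ℤ)) NN, F i * ((1/(w:ℝ)) * ∑ j ∈ Finset.range w, c (i+(j:ℤ)))
      = ∑ l ∈ Finset.Icc (1:ℤ) NN, c l * ((1/(w:ℝ)) * ∑ k ∈ Finset.range w, F (l-(k:ℤ))) := by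
  set B := Finset.Icc (1-(w:ℤ)) NN with hB
  set Ω := Finset.Icc (1:ℤ) NN with hΩ
  have step1 : ∀ i ∈ B, F i * ((1/(w:ℝ)) * ∑ j ∈ Finset.range w, c (i+(j:ℤ)))
      = ∑ l ∈ Ω, (if l ∈ Finset.Icc i (i + (w:ℤ) - 1) then (1/(w:ℝ)) * (F i * c l) else 0) := by
    intro i _
    have h1 : F i * ((1/(w:ℝ)) * ∑ j ∈ Finset.range w, c (i+(j:ℤ)))
        = ∑ l ∈ Finset.Icc i (i + (w:ℤ) - 1), (1/(w:ℝ)) * (F i * c l) := by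
      rw [sum_range_add c i w, Finset.mul_sum, Finset.mul_sum]
      apply Finset.sum_congr rfl
      intro l _
      ring
    have h2 : ∑ l ∈ Ω, (if l ∈ Finset.Icc i (i + (w:ℤ) - 1) then (1/(w:ℝ)) * (F i * c l) else 0)
        = ∑ l ∈ Ω ∩ Finset.Icc i (i + (w:ℤ) - 1), (1/(w:ℝ)) * (F i * c l) :=
      Finset.sum_ite_mem _ _ _
    have h3 : ∑ l ∈ Finset.Icc i (i + (w:ℤ) - 1), (1/(w:ℝ)) * (F i * c l)
        = ∑ l ∈ Ω ∩ Finset.Icc i (i + (w:ℤ) - 1), (1/(w:ℝ)) * (F i * c l) := by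
      apply (Finset.sum_subset (Finset.inter_subset_right)  _).symm
      intro l hl hnl
      have : c l = 0 := by
        apply hc
        simp only [hΩ, Finset.mem_inter, Finset.mem_Icc] at hl hnl
        omega
      rw [this]
      ring
    rw [h1, h3, h2]
  rw [Finset.sum_congr rfl step1, Finset.sum_comm]
  apply Finset.sum_congr rfl
  intro l hl
  simp only [hΩ, Finset.mem_Icc] at hl
  have hcond : ∀ i : ℤ, (l ∈ Finset.Icc i (i + (w:ℤ) - 1)) ↔ (i ∈ Finset.Icc (l - (w:ℤ) + 1) l) := by
    intro i
    simp only [Finset.mem_Icc]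
    omega
  have h4 : ∑ i ∈ B, (if l ∈ Finset.Icc i (i + (w:ℤ) - 1) then (1/(w:ℝ)) * (F i * c l) else 0)
      = ∑ i ∈ B ∩ Finset.Icc (l - (w:ℤ) + 1) l, (1/(w:ℝ)) * (F i * c l) := by
    rw [← Finset.sum_ite_mem]
    apply Finset.sum_congr rfl
    intro i _
    rw [if_congr (hcond i) rfl rfl]
  have h5 : B ∩ Finset.Icc (l - (w:ℤ) + 1) l = Finset.Icc (l - (w:ℤ) + 1) l := by
    apply Finset.inter_eq_right.mpr
    intro a ha
    simp only [Finset.mem_Icc] at ha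
    simp only [hB, Finset.mem_Icc]
    omega
  rw [h4, h5, sum_range_sub F l w]
  rw [Finset.mul_sum, Finset.mul_sum]
  apply Finset.sum_congr rfl
  intro k _
  ring

end TSaux

namespace TSaux

section Taylor

variable {f : ℝ → ℝ → ℝ} {g : ℝ → ℝ} {ε : ℝ} {w : ℕ} {NN : ℤ} {z : ℤ → ℝ} {Bf Bg : ℝ}

lemma taylor_side (hn : Nice f g ε)
    (hf_smooth : ContDiffOn ℝ 2 (fun p : ℝ × ℝ => f p.1 p.2)
      (Icc (0:ℝ) 1 ×ˢ Icc (0:ℝ) 1))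
    (hg_smooth : ContDiffOn ℝ 2 g (Icc (0:ℝ) 1))
    (hBf0 : 0 ≤ Bf) (hBg0 : 0 ≤ Bg)
    (hBg : ∀ y ∈ Icc (0:ℝ) 1, |gd g y| ≤ Bg)
    (hBgL : ∀ a ∈ Icc (0:ℝ) 1, ∀ b ∈ Icc (0:ℝ) 1, |g b - g a| ≤ Bg * |b - a|)
    (hBfL : ∀ a ∈ Icc (0:ℝ) 1, ∀ b ∈ Icc (0:ℝ) 1, |f b ε - f a ε| ≤ Bf * |b - a|)
    (hw : 1 ≤ w) (hNN : 1 ≤ NN)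
    (hz_mem : ∀ i, z i ∈ Icc (0:ℝ) 1)
    (hz_mono : Monotone z)
    (hz_neg : ∀ i : ℤ, i < 0 → z i = 0)
    (hz_pin : ∀ i : ℤ, NN ≤ i → z i = z NN)
    (hz_fix : ∀ i : ℤ, 0 ≤ i → i ≤ NN → z i = Rz f g ε w z i) :
    |phi f g ε w NN z 1 - phi f g ε w NN z 0| ≤ (Bg * (1 + Bf * Bg)) * (1/(w:ℝ)) := by
  have hwR : (0:ℝ) < (w:ℝ) := by exact_mod_cast Nat.pos_of_ne_zero (by omega)
  have hw1 : (0:ℝ) ≤ 1/(w:ℝ) := by positivity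
  set d : ℤ → ℝ := fun i => Sh z i - z i with hd
  -- support of d
  have hd0 : ∀ i : ℤ, i ≤ 0 → d i = 0 := by
    intro i hi
    simp only [hd, Sh, if_neg (by omega : ¬ (1:ℤ) ≤ i)]
    ring
  have hdH : ∀ i : ℤ, NN < i → d i = 0 := by
    intro i hi
    simp only [hd, Sh, if_pos (by omega : (1:ℤ) ≤ i)]
    rw [hz_pin (i-1) (by omega), hz_pin i (by omega)]
    ring
  -- step bound
  have hfixIcc : ∀ t : ℤ, 0 ≤ t → t ≤ NN →
      z t = (1/(w:ℝ)) * ∑ l ∈ Finset.Icc (t-(w:ℤ)+1) t, f (Yz g w z l) ε := by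
    intro t h0 h1
    rw [hz_fix t h0 h1]
    unfold Rz
    rw [sum_range_sub (fun l => f (Yz g w z l) ε) t w]
  have hstep : ∀ i : ℤ, 1 ≤ i → i ≤ NN →
      0 ≤ z i - z (i-1) ∧ z i - z (i-1) ≤ 1/(w:ℝ) := by
    intro i h1 h2
    have e0 : z i - z (i-1)
        = (1/(w:ℝ)) * (f (Yz g w z i) ε - f (Yz g w z (i-(w:ℤ))) ε) := by
      rw [hfixIcc i (by omega) h2, hfixIcc (i-1) (by omega) (by omega)]
      have e1 : Finset.Icc (i-(w:ℤ)+1) i = insert i (Finset.Icc (i-(w:ℤ)+1) (i-1)) := by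
        ext a; simp only [Finset.mem_Icc, Finset.mem_insert]; omega
      have e2 : Finset.Icc (i-1-(w:ℤ)+1) (i-1)
          = insert (i-(w:ℤ)) (Finset.Icc (i-(w:ℤ)+1) (i-1)) := by
        ext a; simp only [Finset.mem_Icc, Finset.mem_insert]; omega
      rw [e1, e2, Finset.sum_insert (by simp only [Finset.mem_Icc]; omega),
        Finset.sum_insert (by simp only [Finset.mem_Icc]; omega)]
      ring
    have hmono := hn.fmono (Yz_mem (w := w) hn hz_mem (i-(w:ℤ))) (Yz_mem (w := w) hn hz_mem i)
      (Yz_mono_s (w := w) hn hz_mem hz_mono (by omega : i - (w:ℤ) ≤ i))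
    have hub := (hn.fmem _ (Yz_mem (w := w) hn hz_mem i)).2
    have hlb := (hn.fmem _ (Yz_mem (w := w) hn hz_mem (i-(w:ℤ)))).1
    constructor
    · rw [e0]
      have : 0 ≤ f (Yz g w z i) ε - f (Yz g w z (i-(w:ℤ))) ε := by linarith [hmono]
      positivity
    · rw [e0]
      calc (1/(w:ℝ)) * (f (Yz g w z i) ε - f (Yz g w z (i-(w:ℤ))) ε)
          ≤ (1/(w:ℝ)) * 1 := by
            apply mul_le_mul_of_nonneg_left _ hw1
            linarith
        _ = 1/(w:ℝ) := by ring
  have hw0 : (w:ℝ) ≠ 0 := ne_of_gt hwR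
  have hd_abs : ∀ i : ℤ, |d i| ≤ 1/(w:ℝ) := by
    intro i
    by_cases h1 : i ≤ 0
    · rw [hd0 i h1]; simpa using hw1
    · by_cases h2 : i ≤ NN
      · have he : d i = -(z i - z (i-1)) := by
          simp only [hd, Sh, if_pos (by omega : (1:ℤ) ≤ i)]; ring
        rw [he, abs_neg, abs_of_nonneg (hstep i (by omega) h2).1]
        exact (hstep i (by omega) h2).2
      · rw [hdH i (by omega)]; simpa using hw1
  have hd_sum : ∑ l ∈ Finset.Icc (1:ℤ) NN, |d l| ≤ 1 := by
    have habs : ∀ l ∈ Finset.Icc (1:ℤ) NN, |d l| = z l - z (l-1) := by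
      intro l hl
      simp only [Finset.mem_Icc] at hl
      have he : d l = -(z l - z (l-1)) := by
        simp only [hd, Sh, if_pos hl.1]; ring
      rw [he, abs_neg, abs_of_nonneg (hstep l hl.1 hl.2).1]
    rw [Finset.sum_congr rfl habs]
    have htel : ∑ l ∈ Finset.Icc (1:ℤ) ((NN.toNat:ℤ)), (z l - z (l-1))
        = z ((NN.toNat:ℤ)) - z 0 := sum_Icc_telescope z NN.toNat
    have hcast : ((NN.toNat:ℤ)) = NN := by omega
    rw [hcast] at htel
    rw [htel]
    have h1 := (hz_mem NN).2
    have h2 := (hz_mem 0).1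
    linarith
  have hv_mem : ∀ s ∈ Icc (0:ℝ) 1, ∀ i, vv z s i ∈ Icc (0:ℝ) 1 := by
    intro s hs i
    have h1 := hz_mem i
    have h2 := Sh_mem hz_mem i
    simp only [mem_Icc] at h1 h2 hs ⊢
    unfold vv
    constructor <;> nlinarith [h1.1, h1.2, h2.1, h2.2, hs.1, hs.2]
  have hv_diff : ∀ s ∈ Icc (0:ℝ) 1, ∀ i, |vv z s i - z i| ≤ 1/(w:ℝ) := by
    intro s hs i
    have he : vv z s i - z i = s * d i := by simp only [vv, hd]; ring
    rw [he, abs_mul, abs_of_nonneg hs.1]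
    calc s * |d i| ≤ 1 * (1/(w:ℝ)) :=
          mul_le_mul hs.2 (hd_abs i) (abs_nonneg _) (by norm_num)
      _ = 1/(w:ℝ) := by ring
  have hY_mem : ∀ s ∈ Icc (0:ℝ) 1, ∀ i, Yz g w (vv z s) i ∈ Icc (0:ℝ) 1 :=
    fun s hs => Yz_mem hn (hv_mem s hs)
  have hY_diff : ∀ s ∈ Icc (0:ℝ) 1, ∀ i, |Yz g w (vv z s) i - Yz g w z i| ≤ Bg * (1/(w:ℝ)) := by
    intro s hs i
    unfold Yz
    rw [← mul_sub, ← Finset.sum_sub_distrib, abs_mul, abs_of_nonneg hw1]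
    have hterm : ∀ j ∈ Finset.range w,
        |g (vv z s (i+(j:ℤ))) - g (z (i+(j:ℤ)))| ≤ Bg * (1/(w:ℝ)) := by
      intro j _
      calc |g (vv z s (i+(j:ℤ))) - g (z (i+(j:ℤ)))|
          ≤ Bg * |vv z s (i+(j:ℤ)) - z (i+(j:ℤ))| := hBgL _ (hz_mem _) _ (hv_mem s hs _)
        _ ≤ Bg * (1/(w:ℝ)) := mul_le_mul_of_nonneg_left (hv_diff s hs _) hBg0
    calc (1/(w:ℝ)) * |∑ j ∈ Finset.range w, (g (vv z s (i+(j:ℤ))) - g (z (i+(j:ℤ))))|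
        ≤ (1/(w:ℝ)) * ∑ j ∈ Finset.range w, |g (vv z s (i+(j:ℤ))) - g (z (i+(j:ℤ)))| :=
          mul_le_mul_of_nonneg_left (Finset.abs_sum_le_sum_abs _ _) hw1
      _ ≤ (1/(w:ℝ)) * ∑ _j ∈ Finset.range w, Bg * (1/(w:ℝ)) :=
          mul_le_mul_of_nonneg_left (Finset.sum_le_sum hterm) hw1
      _ = Bg * (1/(w:ℝ)) := by
          rw [Finset.sum_const, Finset.card_range, nsmul_eq_mul]
          field_simp
  have hfixl : ∀ l : ℤ, 1 ≤ l → l ≤ NN →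
      z l = (1/(w:ℝ)) * ∑ k ∈ Finset.range w, fcl f ε (Yz g w z (l-(k:ℤ))) := by
    intro l h1 h2
    rw [hz_fix l (by omega) h2]
    unfold Rz
    congr 1
    apply Finset.sum_congr rfl
    intro k _
    rw [fcl_eq (Yz_mem (w := w) hn hz_mem _)]
  have hbracket : ∀ s ∈ Icc (0:ℝ) 1, ∀ l : ℤ, 1 ≤ l → l ≤ NN →
      |vv z s l - (1/(w:ℝ)) * ∑ k ∈ Finset.range w, fcl f ε (Yz g w (vv z s) (l-(k:ℤ)))|
        ≤ (1 + Bf * Bg) * (1/(w:ℝ)) := by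
    intro s hs l h1 h2
    have hsplit : vv z s l - (1/(w:ℝ)) * ∑ k ∈ Finset.range w, fcl f ε (Yz g w (vv z s) (l-(k:ℤ)))
        = (vv z s l - z l) + (1/(w:ℝ)) * ∑ k ∈ Finset.range w,
            (fcl f ε (Yz g w z (l-(k:ℤ))) - fcl f ε (Yz g w (vv z s) (l-(k:ℤ)))) := by
      rw [Finset.sum_sub_distrib, mul_sub]
      have hz0 := hfixl l h1 h2
      linarith [hz0]
    rw [hsplit]
    have hterm : ∀ k ∈ Finset.range w,
        |fcl f ε (Yz g w z (l-(k:ℤ))) - fcl f ε (Yz g w (vv z s) (l-(k:ℤ)))|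
          ≤ Bf * (Bg * (1/(w:ℝ))) := by
      intro k _
      rw [fcl_eq (Yz_mem (w := w) hn hz_mem _), fcl_eq (hY_mem s hs _)]
      calc |f (Yz g w z (l-(k:ℤ))) ε - f (Yz g w (vv z s) (l-(k:ℤ))) ε|
          ≤ Bf * |Yz g w z (l-(k:ℤ)) - Yz g w (vv z s) (l-(k:ℤ))| :=
            hBfL _ (hY_mem s hs _) _ (Yz_mem (w := w) hn hz_mem _)
        _ ≤ Bf * (Bg * (1/(w:ℝ))) := by
            apply mul_le_mul_of_nonneg_left _ hBf0
            rw [abs_sub_comm]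
            exact hY_diff s hs _
    calc |(vv z s l - z l) + (1/(w:ℝ)) * ∑ k ∈ Finset.range w,
          (fcl f ε (Yz g w z (l-(k:ℤ))) - fcl f ε (Yz g w (vv z s) (l-(k:ℤ))))|
        ≤ |vv z s l - z l| + |(1/(w:ℝ)) * ∑ k ∈ Finset.range w,
          (fcl f ε (Yz g w z (l-(k:ℤ))) - fcl f ε (Yz g w (vv z s) (l-(k:ℤ))))| := abs_add_le _ _
      _ ≤ 1/(w:ℝ) + (1/(w:ℝ)) * ((w:ℝ) * (Bf * (Bg * (1/(w:ℝ))))) := by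
          apply add_le_add (hv_diff s hs l)
          rw [abs_mul, abs_of_nonneg hw1]
          apply mul_le_mul_of_nonneg_left _ hw1
          calc |∑ k ∈ Finset.range w,
              (fcl f ε (Yz g w z (l-(k:ℤ))) - fcl f ε (Yz g w (vv z s) (l-(k:ℤ))))|
              ≤ ∑ k ∈ Finset.range w, |fcl f ε (Yz g w z (l-(k:ℤ)))
                - fcl f ε (Yz g w (vv z s) (l-(k:ℤ)))| := Finset.abs_sum_le_sum_abs _ _
            _ ≤ ∑ _k ∈ Finset.range w, Bf * (Bg * (1/(w:ℝ))) := Finset.sum_le_sum hterm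
            _ = (w:ℝ) * (Bf * (Bg * (1/(w:ℝ)))) := by
                rw [Finset.sum_const, Finset.card_range, nsmul_eq_mul]
      _ = (1 + Bf * Bg) * (1/(w:ℝ)) := by field_simp
  -- derivative of phi along the path
  set D : ℝ → ℝ := fun s => ∑ l ∈ Finset.Icc (1:ℤ) NN, (gd g (vv z s l) * d l) *
      (vv z s l - (1/(w:ℝ)) * ∑ k ∈ Finset.range w, fcl f ε (Yz g w (vv z s) (l-(k:ℤ)))) with hD
  have hder : ∀ s ∈ Icc (0:ℝ) 1, HasDerivWithinAt (phi f g ε w NN z) (D s) (Icc (0:ℝ) 1) s := by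
    intro s hs
    have hvder : ∀ i : ℤ, HasDerivWithinAt (fun u : ℝ => vv z u i) (d i) (Icc (0:ℝ) 1) s := by
      intro i
      have h1 : HasDerivAt (fun u : ℝ => z i + u * (Sh z i - z i)) (Sh z i - z i) s := by
        simpa using ((hasDerivAt_id s).mul_const (Sh z i - z i)).const_add (z i)
      exact h1.hasDerivWithinAt
    have hmaps : ∀ i : ℤ, MapsTo (fun u : ℝ => vv z u i) (Icc (0:ℝ) 1) (Icc (0:ℝ) 1) :=
      fun i u hu => hv_mem u hu i
    have hgder : ∀ i : ℤ, HasDerivWithinAt (fun u : ℝ => g (vv z u i))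
        (gd g (vv z s i) * d i) (Icc (0:ℝ) 1) s := by
      intro i
      have h2 := (hasDerivWithinAt_g hg_smooth (hv_mem s hs i)).comp s (hvder i) (hmaps i)
      exact h2
    have hGder : ∀ i : ℤ, HasDerivWithinAt (fun u : ℝ => Gc g (vv z u i))
        (gcl g (vv z s i) * d i) (Icc (0:ℝ) 1) s :=
      fun i => by have := (hasDerivAt_Gc hg_smooth (vv z s i)).comp_hasDerivWithinAt s (hvder i); exact this
    have hYder : ∀ i : ℤ, HasDerivWithinAt (fun u : ℝ => Yz g w (vv z u) i)
        ((1/(w:ℝ)) * ∑ j ∈ Finset.range w, gd g (vv z s (i+(j:ℤ))) * d (i+(j:ℤ)))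
        (Icc (0:ℝ) 1) s := by
      intro i
      have h1 : HasDerivWithinAt (fun u : ℝ => ∑ j ∈ Finset.range w, g (vv z u (i+(j:ℤ))))
          (∑ j ∈ Finset.range w, gd g (vv z s (i+(j:ℤ))) * d (i+(j:ℤ))) (Icc (0:ℝ) 1) s :=
        HasDerivWithinAt.fun_sum fun j _ => hgder (i+(j:ℤ))
      have h2 := h1.const_mul (1/(w:ℝ))
      exact h2
    have hFder : ∀ i : ℤ, HasDerivWithinAt (fun u : ℝ => Fc f ε (Yz g w (vv z u) i))
        (fcl f ε (Yz g w (vv z s) i) * ((1/(w:ℝ)) * ∑ j ∈ Finset.range w,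
          gd g (vv z s (i+(j:ℤ))) * d (i+(j:ℤ)))) (Icc (0:ℝ) 1) s :=
      fun i => by have := (hasDerivAt_Fc hf_smooth hn.heps
        (Yz g w (vv z s) i)).comp_hasDerivWithinAt s (hYder i); exact this
    have hterm1 : ∀ i : ℤ, HasDerivWithinAt
        (fun u : ℝ => vv z u i * g (vv z u i) - Gc g (vv z u i))
        (d i * g (vv z s i) + vv z s i * (gd g (vv z s i) * d i) - gcl g (vv z s i) * d i)
        (Icc (0:ℝ) 1) s :=
      fun i => ((hvder i).mul (hgder i)).sub (hGder i)
    have hnat : HasDerivWithinAt (phi f g ε w NN z)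
        ((∑ i ∈ Finset.Icc (0:ℤ) NN, (d i * g (vv z s i) + vv z s i * (gd g (vv z s i) * d i)
            - gcl g (vv z s i) * d i))
          - ∑ i ∈ Finset.Icc (1-(w:ℤ)) NN, fcl f ε (Yz g w (vv z s) i) * ((1/(w:ℝ)) *
              ∑ j ∈ Finset.range w, gd g (vv z s (i+(j:ℤ))) * d (i+(j:ℤ))))
        (Icc (0:ℝ) 1) s := by
      apply HasDerivWithinAt.sub
      · exact HasDerivWithinAt.fun_sum fun i _ => hterm1 i
      · exact HasDerivWithinAt.fun_sum fun i _ => hFder i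
    have hre :
        (∑ i ∈ Finset.Icc (0:ℤ) NN, (d i * g (vv z s i) + vv z s i * (gd g (vv z s i) * d i)
            - gcl g (vv z s i) * d i))
          - ∑ i ∈ Finset.Icc (1-(w:ℤ)) NN, fcl f ε (Yz g w (vv z s) i) * ((1/(w:ℝ)) *
              ∑ j ∈ Finset.range w, gd g (vv z s (i+(j:ℤ))) * d (i+(j:ℤ))) = D s := by
      have e1 : ∀ i ∈ Finset.Icc (0:ℤ) NN,
          d i * g (vv z s i) + vv z s i * (gd g (vv z s i) * d i) - gcl g (vv z s i) * d i
            = vv z s i * (gd g (vv z s i) * d i) := by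
        intro i _
        rw [gcl_eq (hv_mem s hs i)]
        ring
      have e2 : ∑ i ∈ Finset.Icc (0:ℤ) NN, vv z s i * (gd g (vv z s i) * d i)
          = ∑ i ∈ Finset.Icc (1:ℤ) NN, vv z s i * (gd g (vv z s i) * d i) := by
        rw [show Finset.Icc (0:ℤ) NN = insert 0 (Finset.Icc (1:ℤ) NN) from by
          ext a; simp only [Finset.mem_Icc, Finset.mem_insert]; omega,
          Finset.sum_insert (by simp)]
        rw [hd0 0 le_rfl]
        ring
      have e3 := swap_sum (w := w) (NN := NN) hw hNN
        (fun i => fcl f ε (Yz g w (vv z s) i)) (fun l => gd g (vv z s l) * d l)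
        (by
          intro l hl
          show gd g (vv z s l) * d l = 0
          rcases hl with hl | hl
          · rw [hd0 l (by omega)]; ring
          · rw [hdH l hl]; ring)
      rw [Finset.sum_congr rfl e1, e2, e3, hD, ← Finset.sum_sub_distrib]
      apply Finset.sum_congr rfl
      intro l _
      ring
    exact hre ▸ hnat
  -- bound on D
  have hDb : ∀ s ∈ Icc (0:ℝ) 1, |D s| ≤ (Bg * (1 + Bf * Bg)) * (1/(w:ℝ)) := by
    intro s hs
    rw [hD]
    have hterm : ∀ l ∈ Finset.Icc (1:ℤ) NN,
        |(gd g (vv z s l) * d l) * (vv z s l - (1/(w:ℝ)) * ∑ k ∈ Finset.range w,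
          fcl f ε (Yz g w (vv z s) (l-(k:ℤ))))|
          ≤ (Bg * ((1 + Bf * Bg) * (1/(w:ℝ)))) * |d l| := by
      intro l hl
      simp only [Finset.mem_Icc] at hl
      rw [abs_mul, abs_mul]
      have h1 : |gd g (vv z s l)| ≤ Bg := hBg _ (hv_mem s hs l)
      have h2 := hbracket s hs l hl.1 hl.2
      calc |gd g (vv z s l)| * |d l| * |vv z s l - (1/(w:ℝ)) * ∑ k ∈ Finset.range w,
            fcl f ε (Yz g w (vv z s) (l-(k:ℤ)))|
          ≤ (Bg * |d l|) * ((1 + Bf * Bg) * (1/(w:ℝ))) := by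
            apply mul_le_mul _ h2 (abs_nonneg _) (by positivity)
            exact mul_le_mul_of_nonneg_right h1 (abs_nonneg _)
        _ = (Bg * ((1 + Bf * Bg) * (1/(w:ℝ)))) * |d l| := by ring
    calc |∑ l ∈ Finset.Icc (1:ℤ) NN, (gd g (vv z s l) * d l) *
          (vv z s l - (1/(w:ℝ)) * ∑ k ∈ Finset.range w, fcl f ε (Yz g w (vv z s) (l-(k:ℤ))))|
        ≤ ∑ l ∈ Finset.Icc (1:ℤ) NN, |(gd g (vv z s l) * d l) *
          (vv z s l - (1/(w:ℝ)) * ∑ k ∈ Finset.range w, fcl f ε (Yz g w (vv z s) (l-(k:ℤ))))| :=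
          Finset.abs_sum_le_sum_abs _ _
      _ ≤ ∑ l ∈ Finset.Icc (1:ℤ) NN, (Bg * ((1 + Bf * Bg) * (1/(w:ℝ)))) * |d l| :=
          Finset.sum_le_sum hterm
      _ = (Bg * ((1 + Bf * Bg) * (1/(w:ℝ)))) * ∑ l ∈ Finset.Icc (1:ℤ) NN, |d l| := by
          rw [Finset.mul_sum]
      _ ≤ (Bg * ((1 + Bf * Bg) * (1/(w:ℝ)))) * 1 := by
          apply mul_le_mul_of_nonneg_left hd_sum (by positivity)
      _ = (Bg * (1 + Bf * Bg)) * (1/(w:ℝ)) := by ring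
  have hmvt := Convex.norm_image_sub_le_of_norm_hasDerivWithin_le
    (f := phi f g ε w NN z) (f' := D) (C := (Bg * (1 + Bf * Bg)) * (1/(w:ℝ)))
    (s := Icc (0:ℝ) 1) hder
    (fun x hx => by simpa [Real.norm_eq_abs] using hDb x hx)
    (convex_Icc _ _) (left_mem_Icc.mpr (by norm_num)) (right_mem_Icc.mpr (by norm_num))
  simpa [Real.norm_eq_abs] using hmvt

end Taylor

end TSaux


/-- threshold saturation for a scalar admissible system `(f,g)`:
for every `ε < ε*` and a large enough coupling memory `m`, the only fixed
point of the spatially coupled recursion is `x = 0`. -/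
theorem threshold_saturation_scalar_admissible
    (f : ℝ → ℝ → ℝ) (g : ℝ → ℝ)
    (hf_maps : ∀ x ∈ Icc (0:ℝ) 1, ∀ ε ∈ Icc (0:ℝ) 1, f x ε ∈ Icc (0:ℝ) 1)
    (hf_mono_x : ∀ ε ∈ Ioc (0:ℝ) 1, StrictMonoOn (fun x => f x ε) (Ioc (0:ℝ) 1))
    (hf_mono_eps : ∀ x ∈ Ioc (0:ℝ) 1, StrictMonoOn (fun ε => f x ε) (Ioc (0:ℝ) 1))
    (hf_zero : ∀ x ∈ Icc (0:ℝ) 1, ∀ ε ∈ Icc (0:ℝ) 1, f 0 ε = 0 ∧ f x 0 = 0)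
    (hg_maps : MapsTo g (Icc (0:ℝ) 1) (Icc (0:ℝ) 1))
    (hg_mono : StrictMonoOn g (Ioc (0:ℝ) 1))
    (hg0 : g 0 = 0)
    (hf_smooth : ContDiffOn ℝ 2 (fun p : ℝ × ℝ => f p.1 p.2)
      (Icc (0:ℝ) 1 ×ˢ Icc (0:ℝ) 1))
    (hg_smooth : ContDiffOn ℝ 2 g (Icc (0:ℝ) 1)) :
    ∀ ε ∈ Icc (0:ℝ) 1, ε < potentialThreshold f g →
      ∃ m₀ : ℕ, ∀ m : ℕ, m₀ ≤ m → ∀ L : ℕ, ∀ x : ℤ → ℝ,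
        (∀ t : ℤ, x t ∈ Icc (0:ℝ) 1) →
        (∀ t : ℤ, t ∉ Icc (1:ℤ) (L:ℤ) → x t = 0) →
        (∀ t ∈ Icc (1:ℤ) (L:ℤ),
          x t = (1 / (m + 1 : ℝ)) * ∑ k ∈ Finset.range (m + 1),
            f ((1 / (m + 1 : ℝ)) * ∑ j ∈ Finset.range (m + 1),
                g (x (t + (j : ℤ) - (k : ℤ)))) ε) →
        ∀ t : ℤ, x t = 0 := by
  intro ε hε hlt
  classical
  -- bundled basic hypotheses
  have hn : TSaux.Nice f g ε :=
    ⟨hε, fun x hx => hf_maps x hx ε hε,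
      TSaux.f_monoL hf_maps hf_mono_x hf_zero hε,
      (hf_zero 0 ⟨le_rfl, by norm_num⟩ ε hε).1,
      fun x hx => hg_maps hx,
      TSaux.g_monoOn hg_maps hg_mono hg0, hg0⟩
  -- extract ε' from the threshold set
  have hSne : {ε' : ℝ | ε' ∈ Icc (0:ℝ) 1 ∧ 0 < minUnstable f g ε' ∧
      ∀ x ∈ Icc (minUnstable f g ε') 1, 0 < Ufun f g x ε'}.Nonempty := by
    by_contra h
    rw [Set.not_nonempty_iff_eq_empty] at h
    have : potentialThreshold f g = 0 := by
      rw [potentialThreshold, h, Real.sSup_empty]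
    rw [this] at hlt
    linarith [hε.1]
  obtain ⟨ε', hε'S, hεε'⟩ := exists_lt_of_lt_csSup hSne hlt
  obtain ⟨hε'1, hu'pos, hU'⟩ := hε'S
  set u' := minUnstable f g ε' with hu'
  have hu'le1 : u' ≤ 1 := by
    apply Real.sSup_le _ (by norm_num)
    rintro b ⟨hb1, -⟩
    exact hb1.2
  -- the instability property below u'
  have hP2 : ∀ xx ∈ Ioo (0:ℝ) u', f (g xx) ε' < xx := by
    intro xx hxx
    have hTne : {xt : ℝ | xt ∈ Icc (0:ℝ) 1 ∧ ∀ y ∈ Ioo (0:ℝ) xt, f (g y) ε' < y}.Nonempty := by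
      refine ⟨0, ⟨le_rfl, by norm_num⟩, ?_⟩
      intro y hy
      exact absurd hy.2 (not_lt.mpr hy.1.le)
    obtain ⟨xt, hxtT, hxtlt⟩ := exists_lt_of_lt_csSup hTne hxx.2
    exact hxtT.2 xx ⟨hxx.1, hxtlt⟩
  -- comparison f(·,ε) ≤ f(·,ε')
  have hε'mem : ε' ∈ Ioc (0:ℝ) 1 := ⟨lt_of_le_of_lt hε.1 hεε', hε'1.2⟩
  have hcomp : ∀ y ∈ Icc (0:ℝ) 1, f y ε ≤ f y ε' := by
    intro y hy
    rcases eq_or_lt_of_le hy.1 with h0 | h0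
    · rw [← h0, (hf_zero 1 (by norm_num) ε hε).1, (hf_zero 1 (by norm_num) ε' hε'1).1]
    · rcases eq_or_lt_of_le hε.1 with he0 | he0
      · rw [← he0, (hf_zero y hy 0 (by norm_num)).2]
        exact (hf_maps y hy ε' hε'1).1
      · exact le_of_lt (hf_mono_eps y ⟨h0, hy.2⟩ ⟨he0, hε.2⟩ hε'mem hεε')
  -- clamped continuity facts
  have hfc : Continuous (TSaux.fcl f ε) := TSaux.fcl_continuous hf_smooth hε
  have hfc' : Continuous (TSaux.fcl f ε') := TSaux.fcl_continuous hf_smooth hε'1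
  have hgc : Continuous (TSaux.gcl g) := TSaux.gcl_continuous hg_smooth
  have hfm : Monotone (TSaux.fcl f ε) :=
    TSaux.fcl_monotone hf_maps hf_mono_x hf_zero hε
  have hGcCont : Continuous (TSaux.Gc g) := by
    rw [continuous_iff_continuousAt]
    exact fun y => (TSaux.hasDerivAt_Gc hg_smooth y).continuousAt
  have hFcCont : Continuous (TSaux.Fc f ε) := by
    rw [continuous_iff_continuousAt]
    exact fun y => (TSaux.hasDerivAt_Fc hf_smooth hε y).continuousAt
  -- Fc comparison
  have hFcle : ∀ y ∈ Icc (0:ℝ) 1, TSaux.Fc f ε y ≤ TSaux.Fc f ε' y := by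
    intro y hy
    unfold TSaux.Fc
    apply intervalIntegral.integral_mono_on hy.1
      (hfc.intervalIntegrable _ _) (hfc'.intervalIntegrable _ _)
    intro t _
    exact hcomp _ (TSaux.cl_mem t)
  -- energy gap
  have hψcont : ContinuousOn (fun xx => xx * g xx - TSaux.Gc g xx - TSaux.Fc f ε (g xx))
      (Icc u' 1) := by
    have hsub : Icc u' 1 ⊆ Icc (0:ℝ) 1 := Icc_subset_Icc (le_of_lt hu'pos) le_rfl
    have hgon : ContinuousOn g (Icc u' 1) := hg_smooth.continuousOn.mono hsub
    exact ((continuousOn_id.mul hgon).sub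
      (hGcCont.continuousOn)).sub (hFcCont.comp_continuousOn hgon)
  have hIccne : (Icc u' 1).Nonempty := ⟨u', le_rfl, hu'le1⟩
  obtain ⟨xmin, hxminmem, hxminmin⟩ :=
    isCompact_Icc.exists_isMinOn hIccne hψcont
  have hψeq : ∀ xx ∈ Icc u' 1, xx * g xx - TSaux.Gc g xx - TSaux.Fc f ε (g xx)
      = Ufun f g xx ε := by
    intro xx hxx
    have hxx01 : xx ∈ Icc (0:ℝ) 1 := ⟨le_trans (le_of_lt hu'pos) hxx.1, hxx.2⟩
    have hgxx : g xx ∈ Icc (0:ℝ) 1 := hg_maps hxx01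
    rw [Ufun, TSaux.Gc_eq_Gfun hxx01.1 hxx01.2, TSaux.Fc_eq_Ffun hgxx.1 hgxx.2]
  set ΔE := xmin * g xmin - TSaux.Gc g xmin - TSaux.Fc f ε (g xmin) with hΔEdef
  have hΔEpos : 0 < ΔE := by
    have h1 := hU' xmin hxminmem
    have hxx01 : xmin ∈ Icc (0:ℝ) 1 := ⟨le_trans (le_of_lt hu'pos) hxminmem.1, hxminmem.2⟩
    have hgxx : g xmin ∈ Icc (0:ℝ) 1 := hg_maps hxx01
    have h2 : Ufun f g xmin ε' ≤ Ufun f g xmin ε := by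
      rw [Ufun, Ufun, ← TSaux.Fc_eq_Ffun (f := f) (ε := ε) hgxx.1 hgxx.2,
        ← TSaux.Fc_eq_Ffun (f := f) (ε := ε') hgxx.1 hgxx.2]
      have := hFcle (g xmin) hgxx
      linarith
    rw [hΔEdef, hψeq xmin hxminmem]
    linarith
  have hΔElb : ∀ xx ∈ Icc u' 1, ΔE ≤ Ufun f g xx ε := by
    intro xx hxx
    rw [← hψeq xx hxx]
    exact hxminmin hxx
  -- Lipschitz data
  obtain ⟨Bg, hBg0, hBg, hBgL⟩ := TSaux.exists_g_lip hg_smooth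
  obtain ⟨Bf, hBf0, hBfL⟩ := TSaux.exists_f_lip hf_smooth hε
  set K := Bg * (1 + Bf * Bg) with hK
  have hK0 : 0 ≤ K := by positivity
  refine ⟨Nat.ceil ((K + 1) / ΔE), ?_⟩
  intro m hm L x hx_mem hx_out hx_fix
  set w := m + 1 with hwdef
  have hw : 1 ≤ w := by omega
  have hwR : (0:ℝ) < (w:ℝ) := by exact_mod_cast Nat.pos_of_ne_zero (by omega)
  -- convert the fixed point equation
  have hfix' : ∀ t ∈ Icc (1:ℤ) (L:ℤ), x t = TSaux.Rz f g ε w x t := by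
    intro t ht
    rw [hx_fix t ht]
    unfold TSaux.Rz TSaux.Yz
    have hcast : ((w:ℕ):ℝ) = (m:ℝ) + 1 := by push_cast [hwdef]; ring
    rw [hcast]
    congr 1
    apply Finset.sum_congr rfl
    intro k _
    congr 2
    apply Finset.sum_congr rfl
    intro j _
    congr 1
    ring
  -- conclude
  by_contra hne
  push_neg at hne
  obtain ⟨t0, ht0⟩ := hne
  have ht0mem : t0 ∈ Icc (1:ℤ) (L:ℤ) := by
    by_contra h
    exact ht0 (hx_out t0 h)
  have hL1 : 1 ≤ (L:ℤ) := le_trans ht0mem.1 ht0mem.2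
  set NN : ℤ := (L:ℤ) with hNNdef
  have hNN : 1 ≤ NN := hL1
  -- maximum of x
  have hFne : (Finset.Icc (1:ℤ) (L:ℤ)).Nonempty := ⟨t0, by
    simp only [Finset.mem_Icc]; exact ⟨ht0mem.1, ht0mem.2⟩⟩
  obtain ⟨tstar, htsmem, htsmax⟩ := Finset.exists_max_image (Finset.Icc (1:ℤ) (L:ℤ)) x hFne
  set M := x tstar with hM
  have hMmem : M ∈ Icc (0:ℝ) 1 := hx_mem tstar
  have hM0 : 0 < M := by
    have h1 : x t0 ≤ M := htsmax t0 (by simp only [Finset.mem_Icc]; exact ⟨ht0mem.1, ht0mem.2⟩)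
    have h2 := (hx_mem t0).1
    rcases eq_or_lt_of_le h2 with h3 | h3
    · exact absurd h3.symm ht0
    · linarith
  have hMub : ∀ s : ℤ, x s ≤ M := by
    intro s
    by_cases hs : s ∈ Icc (1:ℤ) (L:ℤ)
    · exact htsmax s (by simp only [Finset.mem_Icc]; exact ⟨hs.1, hs.2⟩)
    · rw [hx_out s hs]; exact le_of_lt hM0
  -- M is ≥ u'
  have hMge : u' ≤ M := by
    by_contra hMu
    push_neg at hMu
    have hMIoo : M ∈ Ioo (0:ℝ) u' := ⟨hM0, hMu⟩
    have hgM : g M ∈ Icc (0:ℝ) 1 := hg_maps hMmem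
    have hMle : M ≤ f (g M) ε := by
      have h1 : M = TSaux.Rz f g ε w x tstar := by
        rw [hM]
        exact hfix' tstar (by
          simp only [Finset.mem_Icc] at htsmem
          exact ⟨htsmem.1, htsmem.2⟩)
      nth_rewrite 1 [h1]
      unfold TSaux.Rz
      have hterm : ∀ k ∈ Finset.range w, f (TSaux.Yz g w x (tstar - (k:ℤ))) ε ≤ f (g M) ε := by
        intro k _
        apply hn.fmono (TSaux.Yz_mem (w := w) hn hx_mem _) hgM
        unfold TSaux.Yz
        have hj : ∀ j ∈ Finset.range w, g (x (tstar - (k:ℤ) + (j:ℤ))) ≤ g M := by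
          intro j _
          exact hn.gmono (hx_mem _) hMmem (hMub _)
        calc (1/(w:ℝ)) * ∑ j ∈ Finset.range w, g (x (tstar - (k:ℤ) + (j:ℤ)))
            ≤ (1/(w:ℝ)) * ∑ _j ∈ Finset.range w, g M :=
              mul_le_mul_of_nonneg_left (Finset.sum_le_sum hj) (by positivity)
          _ = g M := by
              rw [Finset.sum_const, Finset.card_range, nsmul_eq_mul]
              field_simp
      calc (1/(w:ℝ)) * ∑ k ∈ Finset.range w, f (TSaux.Yz g w x (tstar - (k:ℤ))) ε
          ≤ (1/(w:ℝ)) * ∑ _k ∈ Finset.range w, f (g M) ε :=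
            mul_le_mul_of_nonneg_left (Finset.sum_le_sum hterm) (by positivity)
        _ = f (g M) ε := by
            rw [Finset.sum_const, Finset.card_range, nsmul_eq_mul]
            field_simp
    have := hP2 M hMIoo
    have := hcomp (g M) hgM
    linarith
  -- the auxiliary fixed point
  set z := TSaux.auxZ f g ε w NN with hz
  have hNN0 : (0:ℤ) ≤ NN := by omega
  have hz_mem : ∀ i, z i ∈ Icc (0:ℝ) 1 := TSaux.auxZ_mem hn hNN0
  have hz_mono : Monotone z := TSaux.auxZ_monotone hn hNN0
  have hz_neg : ∀ i : ℤ, i < 0 → z i = 0 := fun i hi => TSaux.auxZ_neg hn hi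
  have hz_pin : ∀ i : ℤ, NN ≤ i → z i = z NN :=
    fun i hi => TSaux.auxZ_pinned hn hNN0 hf_smooth hg_smooth hi
  have hz_fix : ∀ i : ℤ, 0 ≤ i → i ≤ NN → z i = TSaux.Rz f g ε w z i :=
    fun i h1 h2 => TSaux.auxZ_fix' hn hNN0 hf_smooth hg_smooth h1 h2
  -- domination
  have hdom : M ≤ z NN := by
    have h1 := TSaux.dominates hn hNN0 hx_mem hx_out hfix' (tstar - 1)
    rw [show tstar - 1 + 1 = tstar from by ring] at h1
    have h2 : z (tstar - 1) ≤ z NN := hz_mono (by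
      simp only [Finset.mem_Icc] at htsmem
      omega)
    exact le_trans h1 h2
  set zmax := z NN with hzmax
  have hzmax_mem : zmax ∈ Icc u' 1 := ⟨le_trans hMge hdom, (hz_mem NN).2⟩
  -- the two potential estimates
  have hexact := TSaux.exact_side hn hfc hfm hgc hw hNN hz_mem hz_neg hz_pin
    (hz_fix 0 le_rfl (by omega))
  have htaylor := TSaux.taylor_side hn hf_smooth hg_smooth hBf0 hBg0 hBg hBgL hBfL
    hw hNN hz_mem hz_mono hz_neg hz_pin hz_fix
  -- translate to Ufun
  have hzmax01 : zmax ∈ Icc (0:ℝ) 1 := hz_mem NN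
  have hgzmax : g zmax ∈ Icc (0:ℝ) 1 := hg_maps hzmax01
  have hUeq : Ufun f g zmax ε
      = zmax * g zmax - TSaux.Gc g zmax - TSaux.Fc f ε (g zmax) := by
    rw [Ufun, TSaux.Gc_eq_Gfun hzmax01.1 hzmax01.2, TSaux.Fc_eq_Ffun hgzmax.1 hgzmax.2]
  have hgap : ΔE ≤ Ufun f g zmax ε := hΔElb zmax hzmax_mem
  -- numerical contradiction
  have habs := abs_le.mp htaylor
  have hfinal : Ufun f g zmax ε ≤ (K + 1) * (1/(w:ℝ)) := by
    rw [hUeq]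
    have h1 := habs.1
    have h2 := hexact
    have heq : K * (1/(w:ℝ)) + 1/(w:ℝ) = (K + 1) * (1/(w:ℝ)) := by ring
    rw [hK] at heq ⊢
    linarith
  have hwlarge : (K + 1) / ΔE < (w:ℝ) := by
    have h1 : (K + 1) / ΔE ≤ (Nat.ceil ((K + 1) / ΔE) : ℝ) := Nat.le_ceil _
    have h2 : (Nat.ceil ((K + 1) / ΔE) : ℝ) ≤ (m:ℝ) := by exact_mod_cast hm
    have h3 : (m:ℝ) < (w:ℝ) := by
      rw [hwdef]; push_cast; linarith
    linarith
  have hcontr : (K + 1) * (1/(w:ℝ)) < ΔE := by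
    rw [mul_one_div, div_lt_iff₀ hwR]
    calc K + 1 = ((K + 1) / ΔE) * ΔE := by field_simp
      _ < (w:ℝ) * ΔE := by
          apply mul_lt_mul_of_pos_right hwlarge hΔEpos
      _ = ΔE * (w:ℝ) := by ring
  linarith
end

section
/- Let h : ℝ×ℝ → ℝ map [0,1]×[0,1] into [0,1] and satisfy: h(0,ε) = h(x,0) = 0 for all x, ε ∈ [0,1]; for each fixed second argument in (0,1], h is strictly increasing in its first argument on (0,1]; for each fixed first argument in (0,1], h is strictly increasing in its second argument on (0,1]; and h is twice continuously differentiable on [0,1]×[0,1]. Let ε* be the potential threshold of the scalar admissible system f(x,ε) = h(ε·x,ε), g(x) = x. Then for every ε ∈ [0,1] with ε < ε*, there exists m₀ ∈ ℕ such that for every m ≥ m₀, every L ∈ ℕ, and every family (x_t)_{t∈ℤ} with x_t ∈ [0,1] for all t, x_t = 0 for all t ∉ {1,…,L}, and x_t = (1/(m+1))·Σ_{k=0}^{m} h( (ε/(m+1))·Σ_{j=0}^{m} x_{t−j+k}, ε ) for all t ∈ {1,…,L}, one has x_t = 0 for all t ∈ ℤ; that is, threshold saturation holds for spatially coupled parallel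 concatenated codes. -/
open Set intervalIntegral MeasureTheory

lemma TS_tele (φ : ℤ → ℝ) : ∀ (n : ℕ) (a : ℤ),
    ∑ i ∈ Finset.Ioc a (a + n), (φ i - φ (i-1)) = φ (a + n) - φ a := by
  intro n
  induction n with
  | zero => intro a; simp
  | succ n ih =>
    intro a
    have hins : Finset.Ioc a (a + (n+1 : ℕ)) = insert (a + n + 1) (Finset.Ioc a (a + n)) := by
      ext i
      simp only [Finset.mem_Ioc, Finset.mem_insert]
      push_cast
      omega
    rw [hins, Finset.sum_insert (by simp [Finset.mem_Ioc])]
    rw [ih a]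
    have : (a + n + 1 - 1 : ℤ) = a + n := by ring
    rw [this]
    push_cast
    ring_nf

lemma TS_tele' (φ : ℤ → ℝ) {a b : ℤ} (hab : a ≤ b) :
    ∑ i ∈ Finset.Ioc a b, (φ i - φ (i-1)) = φ b - φ a := by
  obtain ⟨n, rfl⟩ : ∃ n : ℕ, b = a + n := ⟨(b - a).toNat, by omega⟩
  exact TS_tele φ _ a

lemma TS_Ioc_split (ψ : ℤ → ℝ) {a b c : ℤ} (hab : a ≤ b) (hbc : b ≤ c) :
    ∑ i ∈ Finset.Ioc a c, ψ i = ∑ i ∈ Finset.Ioc a b, ψ i + ∑ i ∈ Finset.Ioc b c, ψ i := by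
  rw [← Finset.sum_union]
  · rw [Finset.Ioc_union_Ioc_eq_Ioc hab hbc]
  · rw [Finset.disjoint_left]
    intro i hi hi'
    simp only [Finset.mem_Ioc] at hi hi'
    omega

lemma TS_intable {φ : ℝ → ℝ} (hc : ContinuousOn φ (Icc 0 1)) {a b : ℝ}
    (ha : a ∈ Icc (0:ℝ) 1) (hb : b ∈ Icc (0:ℝ) 1) :
    IntervalIntegrable φ volume a b :=
  (hc.mono (uIcc_subset_Icc ha hb)).intervalIntegrable

lemma TS_Fsub {φ : ℝ → ℝ} (hc : ContinuousOn φ (Icc 0 1)) {a b : ℝ}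
    (ha : a ∈ Icc (0:ℝ) 1) (hb : b ∈ Icc (0:ℝ) 1) :
    (∫ t in (0:ℝ)..b, φ t) - (∫ t in (0:ℝ)..a, φ t) = ∫ t in a..b, φ t := by
  have h1 : IntervalIntegrable φ volume 0 a := TS_intable hc (by norm_num) ha
  have h2 : IntervalIntegrable φ volume a b := TS_intable hc ha hb
  rw [← intervalIntegral.integral_add_adjacent_intervals h1 h2]
  ring

lemma TS_int_nonneg {φ : ℝ → ℝ}
    (hpos : ∀ t ∈ Icc (0:ℝ) 1, 0 ≤ φ t) {a b : ℝ}
    (ha : a ∈ Icc (0:ℝ) 1) (hb : b ∈ Icc (0:ℝ) 1) (hab : a ≤ b) :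
    0 ≤ ∫ t in a..b, φ t := by
  apply intervalIntegral.integral_nonneg hab
  intro t ht
  exact hpos t ⟨le_trans ha.1 ht.1, le_trans ht.2 hb.2⟩

lemma TS_int_le {φ : ℝ → ℝ} (hc : ContinuousOn φ (Icc 0 1))
    (hle : ∀ t ∈ Icc (0:ℝ) 1, φ t ≤ 1) {a b : ℝ}
    (ha : a ∈ Icc (0:ℝ) 1) (hb : b ∈ Icc (0:ℝ) 1) (hab : a ≤ b) :
    (∫ t in a..b, φ t) ≤ b - a := by
  have := intervalIntegral.integral_mono_on hab (TS_intable hc ha hb)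
    (_root_.intervalIntegrable_const (c := (1:ℝ)))
    (fun t ht => hle t ⟨le_trans ha.1 ht.1, le_trans ht.2 hb.2⟩)
  simpa using this

lemma TS_key_integral {φ : ℝ → ℝ} (hc : ContinuousOn φ (Icc 0 1)) {K : ℝ}
    (hlip : ∀ s ∈ Icc (0:ℝ) 1, ∀ t ∈ Icc (0:ℝ) 1, t ≤ s → φ s - φ t ≤ K * (s - t))
    {a b : ℝ} (hab : a ≤ b) (ha : a ∈ Icc (0:ℝ) 1) (hb : b ∈ Icc (0:ℝ) 1) :
    φ b * (b - a) - K * (b-a)^2/2 ≤ ∫ t in a..b, φ t := by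
  have hmem : ∀ t ∈ Icc a b, t ∈ Icc (0:ℝ) 1 :=
    fun t ht => ⟨le_trans ha.1 ht.1, le_trans ht.2 hb.2⟩
  have h2 : IntervalIntegrable φ volume a b := TS_intable hc ha hb
  have hsub : (∫ t in a..b, (φ b - φ t)) = φ b * (b - a) - ∫ t in a..b, φ t := by
    rw [intervalIntegral.integral_sub (_root_.intervalIntegrable_const (c := φ b)) h2]
    simp [mul_comm]
  have hmono : (∫ t in a..b, (φ b - φ t)) ≤ ∫ t in a..b, K * (b - t) := by
    apply intervalIntegral.integral_mono_on hab
      ((_root_.intervalIntegrable_const (c := φ b)).sub h2)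
      ((continuous_const.mul (continuous_const.sub continuous_id)).intervalIntegrable a b)
    intro t ht
    exact hlip b hb t (hmem t ht) ht.2
  have hcomp : (∫ t in a..b, K * (b - t)) = K * (b-a)^2/2 := by
    rw [intervalIntegral.integral_const_mul]
    have : (∫ t in a..b, (b - t)) = (b-a)^2/2 := by
      rw [show (fun t : ℝ => b - t) = (fun t : ℝ => b - id t) from rfl,
        intervalIntegral.integral_sub (_root_.intervalIntegrable_const (c := b))
        (continuous_id.intervalIntegrable a b)]
      simp [integral_id]
      ring
    rw [this]; ring
  nlinarith [hsub, hmono, hcomp]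

lemma TS_lip (h : ℝ → ℝ → ℝ)
    (h_smooth : ContDiffOn ℝ 2 (fun p : ℝ × ℝ => h p.1 p.2)
      (Icc (0:ℝ) 1 ×ˢ Icc (0:ℝ) 1)) :
    ∃ K : ℝ, 0 ≤ K ∧ ∀ ε ∈ Icc (0:ℝ) 1, ∀ a ∈ Icc (0:ℝ) 1, ∀ b ∈ Icc (0:ℝ) 1,
      |h (ε*a) ε - h (ε*b) ε| ≤ K * |a - b| := by
  set s : Set (ℝ × ℝ) := Icc (0:ℝ) 1 ×ˢ Icc (0:ℝ) 1 with hs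
  set F : ℝ × ℝ → ℝ := fun p => h p.1 p.2 with hF
  have hconv : Convex ℝ s := (convex_Icc _ _).prod (convex_Icc _ _)
  have hud : UniqueDiffOn ℝ s := (uniqueDiffOn_Icc one_pos).prod (uniqueDiffOn_Icc one_pos)
  have h1 : ContDiffOn ℝ 1 F s := h_smooth.of_le (by norm_num)
  have hdiff : DifferentiableOn ℝ F s := h1.differentiableOn one_ne_zero
  have hcontd : ContinuousOn (fun x => fderivWithin ℝ F s x) s :=
    h1.continuousOn_fderivWithin hud (le_refl _)
  have hcomp : IsCompact s := isCompact_Icc.prod isCompact_Icc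
  obtain ⟨C, hC⟩ := hcomp.exists_bound_of_continuousOn hcontd
  have hlip : LipschitzOnWith C.toNNReal F s := by
    apply hconv.lipschitzOnWith_of_nnnorm_fderivWithin_le hdiff
    intro x hx
    have := hC x hx
    rw [← Real.toNNReal_coe (r := ‖fderivWithin ℝ F s x‖₊)]
    exact Real.toNNReal_mono (by simpa using this)
  refine ⟨max C 0, le_max_right _ _, ?_⟩
  intro ε hε a ha b hb
  have hmem : ∀ c : ℝ, c ∈ Icc (0:ℝ) 1 → ((ε * c, ε) : ℝ × ℝ) ∈ s := by
    intro c hc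
    exact ⟨⟨mul_nonneg hε.1 hc.1, mul_le_one₀ hε.2 hc.1 hc.2⟩, hε⟩
  have := hlip.dist_le_mul (ε * a, ε) (hmem a ha) ((ε * b, ε)) (hmem b hb)
  rw [Prod.dist_eq] at this
  simp only [Real.dist_eq] at this
  have hd : dist (h (ε*a) ε) (h (ε*b) ε) ≤ (C.toNNReal : ℝ) * max (|ε*a - ε*b|) (|ε - ε|) := this
  rw [Real.dist_eq] at hd
  have h2 : max (|ε*a - ε*b|) (|ε - ε|) = |ε| * |a - b| := by
    rw [sub_self, abs_zero, ← abs_mul, ← mul_sub]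
    exact max_eq_left (abs_nonneg _)
  have h3 : |ε| * |a-b| ≤ |a - b| := by
    rw [abs_of_nonneg hε.1]
    nlinarith [abs_nonneg (a - b), hε.1, hε.2]
  have h4 : (C.toNNReal : ℝ) ≤ max C 0 := by
    simp [Real.coe_toNNReal']
  calc |h (ε*a) ε - h (ε*b) ε| ≤ (C.toNNReal : ℝ) * (|ε| * |a-b|) := by
        rw [← h2]; exact hd
    _ ≤ max C 0 * |a - b| := by
        apply mul_le_mul h4 h3 (by positivity) (le_max_right _ _)

set_option maxHeartbeats 2000000

/-- threshold saturation for spatially coupled parallel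
concatenated codes.  Here `h` is the BCJR transfer function of the component
encoder, the underlying scalar admissible system is `f(x,ε) = h(ε·x,ε)`,
`g(x) = x`, and `ε*` is its potential threshold. -/
theorem threshold_saturation_SC_PCC
    (h : ℝ → ℝ → ℝ)
    (h_maps : ∀ x ∈ Icc (0:ℝ) 1, ∀ ε ∈ Icc (0:ℝ) 1, h x ε ∈ Icc (0:ℝ) 1)
    (h_zero : ∀ x ∈ Icc (0:ℝ) 1, ∀ ε ∈ Icc (0:ℝ) 1, h 0 ε = 0 ∧ h x 0 = 0)
    (h_mono_x : ∀ ε ∈ Ioc (0:ℝ) 1, StrictMonoOn (fun x => h x ε) (Ioc (0:ℝ) 1))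
    (h_mono_eps : ∀ x ∈ Ioc (0:ℝ) 1, StrictMonoOn (fun ε => h x ε) (Ioc (0:ℝ) 1))
    (h_smooth : ContDiffOn ℝ 2 (fun p : ℝ × ℝ => h p.1 p.2)
      (Icc (0:ℝ) 1 ×ˢ Icc (0:ℝ) 1)) :
    ∀ ε ∈ Icc (0:ℝ) 1,
      ε < potentialThreshold (fun x ε' => h (ε' * x) ε') (fun x => x) →
      ∃ m₀ : ℕ, ∀ m : ℕ, m₀ ≤ m → ∀ L : ℕ, ∀ x : ℤ → ℝ,
        (∀ t : ℤ, x t ∈ Icc (0:ℝ) 1) →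
        (∀ t : ℤ, t ∉ Icc (1:ℤ) (L:ℤ) → x t = 0) →
        (∀ t ∈ Icc (1:ℤ) (L:ℤ),
          x t = (1 / (m + 1 : ℝ)) * ∑ k ∈ Finset.range (m + 1),
            h ((ε / (m + 1 : ℝ)) * ∑ j ∈ Finset.range (m + 1),
                x (t - (j : ℤ) + (k : ℤ))) ε) →
        ∀ t : ℤ, x t = 0 := by
  intro ε hε hlt
  -- extract a threshold element ε' above ε
  have hTne : {ε'' : ℝ | ε'' ∈ Icc (0:ℝ) 1 ∧
      0 < minUnstable (fun x ε' => h (ε' * x) ε') (fun x => x) ε'' ∧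
      ∀ x ∈ Icc (minUnstable (fun x ε' => h (ε' * x) ε') (fun x => x) ε'') 1,
        0 < Ufun (fun x ε' => h (ε' * x) ε') (fun x => x) x ε''}.Nonempty := by
    by_contra hne
    rw [Set.not_nonempty_iff_eq_empty] at hne
    rw [potentialThreshold, hne, Real.sSup_empty] at hlt
    exact absurd hlt (not_lt.2 hε.1)
  have hlt' : ε < sSup {ε'' : ℝ | ε'' ∈ Icc (0:ℝ) 1 ∧
      0 < minUnstable (fun x ε' => h (ε' * x) ε') (fun x => x) ε'' ∧
      ∀ x ∈ Icc (minUnstable (fun x ε' => h (ε' * x) ε') (fun x => x) ε'') 1,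
        0 < Ufun (fun x ε' => h (ε' * x) ε') (fun x => x) x ε''} := hlt
  obtain ⟨ε', hε'T, hεε'⟩ := exists_lt_of_lt_csSup hTne hlt'
  obtain ⟨hε'01, hupos, hUpos⟩ := hε'T
  set u : ℝ := minUnstable (fun x ε' => h (ε' * x) ε') (fun x => x) ε' with hudef
  -- properties of u
  have hSmem : (0:ℝ) ∈ {xt : ℝ | xt ∈ Icc (0:ℝ) 1 ∧
      ∀ x ∈ Ioo (0:ℝ) xt, (fun x ε'' => h (ε'' * x) ε'') ((fun x => x) x) ε' < x} := by
    refine ⟨⟨le_refl 0, zero_le_one⟩, ?_⟩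
    intro z hz
    exact absurd hz.2 (not_lt.2 hz.1.le)
  have hSbdd : BddAbove {xt : ℝ | xt ∈ Icc (0:ℝ) 1 ∧
      ∀ x ∈ Ioo (0:ℝ) xt, (fun x ε'' => h (ε'' * x) ε'') ((fun x => x) x) ε' < x} :=
    ⟨1, fun y hy => hy.1.2⟩
  have hu1 : u ≤ 1 := csSup_le ⟨0, hSmem⟩ (fun y hy => hy.1.2)
  have hu0 : 0 < u := hupos
  have hkey : ∀ z : ℝ, 0 < z → z < u → h (ε' * z) ε' < z := by
    intro z hz hzu
    obtain ⟨xt, hxt, hzxt⟩ := exists_lt_of_lt_csSup ⟨0, hSmem⟩ hzu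
    exact hxt.2 z ⟨hz, hzxt⟩
  -- dispose of the case ε = 0
  rcases eq_or_lt_of_le hε.1 with hε0 | hε0
  · refine ⟨0, fun m _ L x hx01 hxout hxfix t => ?_⟩
    by_cases ht : t ∈ Icc (1:ℤ) (L:ℤ)
    · rw [hxfix t ht]
      have hz : ∀ k ∈ Finset.range (m+1),
          h ((ε / (m + 1 : ℝ)) * ∑ j ∈ Finset.range (m + 1), x (t - (j:ℤ) + (k:ℤ))) ε = 0 := by
        intro k _
        rw [← hε0]
        simpa using (h_zero 0 ⟨le_refl 0, zero_le_one⟩ 0 ⟨le_refl 0, zero_le_one⟩).1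
      rw [Finset.sum_congr rfl hz]
      simp
    · exact hxout t ht
  -- main case : 0 < ε
  have hε'pos : 0 < ε' := lt_trans hε0 hεε'
  have hε'1 : ε' ≤ 1 := hε'01.2
  have hε1 : ε ≤ 1 := hε.2
  -- the scalar map f₀
  set f₀ : ℝ → ℝ := fun z => h (ε * z) ε with hf₀def
  obtain ⟨K, hK0, hKlip⟩ := TS_lip h h_smooth
  have hf0lip : ∀ a ∈ Icc (0:ℝ) 1, ∀ b ∈ Icc (0:ℝ) 1, |f₀ a - f₀ b| ≤ K * |a - b| :=
    fun a ha b hb => hKlip ε hε a ha b hb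
  have hf0maps : ∀ z ∈ Icc (0:ℝ) 1, f₀ z ∈ Icc (0:ℝ) 1 := by
    intro z hz
    exact h_maps (ε * z) ⟨mul_nonneg hε.1 hz.1, mul_le_one₀ hε.2 hz.1 hz.2⟩ ε hε
  have hf00 : f₀ 0 = 0 := by
    show h (ε * 0) ε = 0
    rw [mul_zero]
    exact (h_zero 0 ⟨le_refl 0, zero_le_one⟩ ε hε).1
  have hf0mono : ∀ a ∈ Icc (0:ℝ) 1, ∀ b ∈ Icc (0:ℝ) 1, a ≤ b → f₀ a ≤ f₀ b := by
    intro a ha b hb hab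
    rcases eq_or_lt_of_le ha.1 with ha0 | ha0
    · rw [show f₀ a = 0 from by rw [← ha0] at *; exact hf00]
      exact (hf0maps b hb).1
    · rcases eq_or_lt_of_le hab with rfl | hab'
      · exact le_refl _
      · have := h_mono_x ε ⟨hε0, hε1⟩ (a := ε * a) (b := ε * b)
          ⟨mul_pos hε0 ha0, mul_le_one₀ hε.2 ha.1 ha.2⟩
          ⟨mul_pos hε0 (lt_of_lt_of_le ha0 hab), mul_le_one₀ hε.2 hb.1 hb.2⟩
          (by nlinarith)
        exact le_of_lt this
  have hf0lt : ∀ z : ℝ, 0 < z → z < u → f₀ z < z := by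
    intro z hz hzu
    have hz1 : z ≤ 1 := le_trans hzu.le hu1
    have hεz : ε * z ∈ Ioc (0:ℝ) 1 := ⟨mul_pos hε0 hz, mul_le_one₀ hε1 hz.le hz1⟩
    have h1 : h (ε * z) ε < h (ε * z) ε' :=
      h_mono_eps (ε * z) hεz ⟨hε0, hε1⟩ ⟨hε'pos, hε'1⟩ hεε'
    have h2 : h (ε * z) ε' ≤ h (ε' * z) ε' := by
      rcases eq_or_lt_of_le (mul_le_mul_of_nonneg_right hεε'.le hz.le) with heq | hlt2
      · rw [heq]
      · exact le_of_lt (h_mono_x ε' ⟨hε'pos, hε'1⟩ hεz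
          ⟨mul_pos hε'pos hz, mul_le_one₀ hε'1 hz.le hz1⟩ hlt2)
    calc f₀ z = h (ε * z) ε := rfl
      _ < h (ε * z) ε' := h1
      _ ≤ h (ε' * z) ε' := h2
      _ < z := hkey z hz hzu
  have hf0le' : ∀ z ∈ Icc (0:ℝ) 1, f₀ z ≤ h (ε' * z) ε' := by
    intro z hz
    rcases eq_or_lt_of_le hz.1 with hz0 | hz0
    · rw [← hz0, hf00]
      simp only [mul_zero]
      rw [(h_zero 0 ⟨le_refl 0, zero_le_one⟩ ε' hε'01).1]
    · have hεz : ε * z ∈ Ioc (0:ℝ) 1 := ⟨mul_pos hε0 hz0, mul_le_one₀ hε1 hz.1 hz.2⟩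
      have h1 : h (ε * z) ε < h (ε * z) ε' :=
        h_mono_eps (ε * z) hεz ⟨hε0, hε1⟩ ⟨hε'pos, hε'1⟩ hεε'
      have h2 : h (ε * z) ε' ≤ h (ε' * z) ε' := by
        rcases eq_or_lt_of_le (mul_le_mul_of_nonneg_right hεε'.le hz0.le) with heq | hlt2
        · rw [heq]
        · exact le_of_lt (h_mono_x ε' ⟨hε'pos, hε'1⟩ hεz
            ⟨mul_pos hε'pos hz0, mul_le_one₀ hε'1 hz.1 hz.2⟩ hlt2)
      exact le_of_lt (lt_of_lt_of_le h1 h2)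
  have hf0cont : ContinuousOn f₀ (Icc (0:ℝ) 1) := by
    have hc : Continuous (fun z : ℝ => ((ε * z, ε) : ℝ × ℝ)) :=
      (continuous_const.mul continuous_id).prodMk continuous_const
    apply (h_smooth.continuousOn.comp hc.continuousOn)
    intro z hz
    exact ⟨⟨mul_nonneg hε.1 hz.1, mul_le_one₀ hε.2 hz.1 hz.2⟩, hε⟩
  have hf'cont : ContinuousOn (fun z : ℝ => h (ε' * z) ε') (Icc (0:ℝ) 1) := by
    have hc : Continuous (fun z : ℝ => ((ε' * z, ε') : ℝ × ℝ)) :=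
      (continuous_const.mul continuous_id).prodMk continuous_const
    apply (h_smooth.continuousOn.comp hc.continuousOn)
    intro z hz
    exact ⟨⟨mul_nonneg hε'01.1 hz.1, mul_le_one₀ hε'01.2 hz.1 hz.2⟩, hε'01⟩
  have hf'maps : ∀ z ∈ Icc (0:ℝ) 1, h (ε' * z) ε' ∈ Icc (0:ℝ) 1 := by
    intro z hz
    exact h_maps (ε' * z) ⟨mul_nonneg hε'01.1 hz.1, mul_le_one₀ hε'01.2 hz.1 hz.2⟩ ε' hε'01
  have hUval : ∀ z : ℝ, Ufun (fun x ε'' => h (ε'' * x) ε'') (fun x => x) z ε'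
      = z^2/2 - ∫ t in (0:ℝ)..z, h (ε' * t) ε' := by
    intro z
    simp only [Ufun, Gfun, Ffun, integral_id]
    ring_nf
  have hFcont : ContinuousOn (fun z : ℝ => ∫ t in (0:ℝ)..z, h (ε' * t) ε') (Icc (0:ℝ) 1) := by
    apply LipschitzOnWith.continuousOn (K := 1)
    apply LipschitzOnWith.of_dist_le_mul
    intro a ha b hb
    rw [Real.dist_eq, Real.dist_eq]
    push_cast
    rcases le_total b a with hab | hab
    · rw [show (∫ t in (0:ℝ)..a, h (ε' * t) ε') - (∫ t in (0:ℝ)..b, h (ε' * t) ε')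
          = ∫ t in b..a, h (ε' * t) ε' from TS_Fsub hf'cont hb ha]
      rw [abs_of_nonneg (TS_int_nonneg (fun t ht => (hf'maps t ht).1) hb ha hab),
        abs_of_nonneg (sub_nonneg.2 hab)]
      have := TS_int_le hf'cont (fun t ht => (hf'maps t ht).2) hb ha hab
      linarith
    · rw [abs_sub_comm, abs_sub_comm a b]
      rw [show (∫ t in (0:ℝ)..b, h (ε' * t) ε') - (∫ t in (0:ℝ)..a, h (ε' * t) ε')
          = ∫ t in a..b, h (ε' * t) ε' from TS_Fsub hf'cont ha hb]
      rw [abs_of_nonneg (TS_int_nonneg (fun t ht => (hf'maps t ht).1) ha hb hab),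
        abs_of_nonneg (sub_nonneg.2 hab)]
      have := TS_int_le hf'cont (fun t ht => (hf'maps t ht).2) ha hb hab
      linarith
  have hUcont : ContinuousOn
      (fun z : ℝ => Ufun (fun x ε'' => h (ε'' * x) ε'') (fun x => x) z ε') (Icc u 1) := by
    have hc : ContinuousOn (fun z : ℝ => z^2/2 - ∫ t in (0:ℝ)..z, h (ε' * t) ε') (Icc (0:ℝ) 1) :=
      (((continuous_pow 2).continuousOn).div_const 2).sub hFcont
    exact ContinuousOn.congr (hc.mono (Icc_subset_Icc hu0.le (le_refl 1)))
      (fun z hz => hUval z)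
  obtain ⟨z₀, hz₀mem, hz₀min⟩ := isCompact_Icc.exists_isMinOn ⟨u, le_refl u, hu1⟩ hUcont
  set ΔE := Ufun (fun x ε'' => h (ε'' * x) ε'') (fun x => x) z₀ ε' with hΔEdef
  have hΔEpos : 0 < ΔE := hUpos z₀ hz₀mem
  have hmin : ∀ z ∈ Icc u 1, ΔE ≤ z^2/2 - ∫ t in (0:ℝ)..z, f₀ t := by
    intro z hz
    have hz01 : z ∈ Icc (0:ℝ) 1 := ⟨le_trans hu0.le hz.1, hz.2⟩
    have h1 : ΔE ≤ Ufun (fun x ε'' => h (ε'' * x) ε'') (fun x => x) z ε' :=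
      isMinOn_iff.1 hz₀min z hz
    rw [hUval z] at h1
    have h2 : (∫ t in (0:ℝ)..z, f₀ t) ≤ ∫ t in (0:ℝ)..z, h (ε' * t) ε' := by
      apply intervalIntegral.integral_mono_on hz01.1
        (TS_intable hf0cont (by norm_num) hz01) (TS_intable hf'cont (by norm_num) hz01)
      intro t ht
      exact hf0le' t ⟨ht.1, le_trans ht.2 hz01.2⟩
    linarith
  refine ⟨⌈K / ΔE⌉₊, ?_⟩
  intro m hm L x hx01 hxout hxfix
  have hzero : ∀ t : ℤ, x t = 0 := by
    by_contra hcon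
    push_neg at hcon
    obtain ⟨t₁, ht₁⟩ := hcon
    -- setup for the coupled system of width m+1
    set w : ℝ := (m : ℝ) + 1 with hwdef
    have hw : (0:ℝ) < w := by positivity
    have hwinv : (0:ℝ) ≤ 1/w := by positivity
    have hw1 : (1/w) * ((m:ℝ)+1) = 1 := by rw [← hwdef, one_div, inv_mul_cancel₀ hw.ne']
    have hsum01 : ∀ g : ℕ → ℝ, (∀ j ∈ Finset.range (m+1), g j ∈ Icc (0:ℝ) 1) →
        (1/w) * (∑ j ∈ Finset.range (m+1), g j) ∈ Icc (0:ℝ) 1 := by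
      intro g hg
      constructor
      · exact mul_nonneg hwinv (Finset.sum_nonneg (fun j hj => (hg j hj).1))
      · have h1 : (∑ j ∈ Finset.range (m+1), g j) ≤ ∑ _j ∈ Finset.range (m+1), (1:ℝ) :=
          Finset.sum_le_sum (fun j hj => (hg j hj).2)
        have h2 : (∑ _j ∈ Finset.range (m+1), (1:ℝ)) = (m:ℝ)+1 := by
          simp [Finset.sum_const, Finset.card_range]
        calc (1/w) * (∑ j ∈ Finset.range (m+1), g j) ≤ (1/w) * ((m:ℝ)+1) := by
              rw [← h2] at *; exact mul_le_mul_of_nonneg_left h1 hwinv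
          _ = 1 := hw1
    set avg : (ℤ → ℝ) → ℤ → ℝ := fun vv t => (1/w) * ∑ j ∈ Finset.range (m+1), vv (t - j)
      with havgdef
    set Tm : (ℤ → ℝ) → ℤ → ℝ := fun vv t => if t ≤ 0 then 0 else
      (1/w) * ∑ k ∈ Finset.range (m+1), f₀ (avg vv (t + k)) with hTmdef
    have havg01 : ∀ vv : ℤ → ℝ, (∀ s, vv s ∈ Icc (0:ℝ) 1) → ∀ t, avg vv t ∈ Icc (0:ℝ) 1 :=
      fun vv hvv t => hsum01 _ (fun j _ => hvv _)
    have havgmono : ∀ vv ww : ℤ → ℝ, (∀ s, vv s ≤ ww s) → ∀ t, avg vv t ≤ avg ww t :=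
      fun vv ww hle t => mul_le_mul_of_nonneg_left
        (Finset.sum_le_sum (fun j _ => hle _)) hwinv
    have hTm01 : ∀ vv : ℤ → ℝ, (∀ s, vv s ∈ Icc (0:ℝ) 1) → ∀ t, Tm vv t ∈ Icc (0:ℝ) 1 := by
      intro vv hvv t
      by_cases ht : t ≤ 0
      · simp only [hTmdef, if_pos ht]
        exact ⟨le_refl 0, zero_le_one⟩
      · simp only [hTmdef, if_neg ht]
        exact hsum01 _ (fun k _ => hf0maps _ (havg01 vv hvv _))
    have hTmmono : ∀ vv ww : ℤ → ℝ, (∀ s, vv s ∈ Icc (0:ℝ) 1) → (∀ s, ww s ∈ Icc (0:ℝ) 1) →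
        (∀ s, vv s ≤ ww s) → ∀ t, Tm vv t ≤ Tm ww t := by
      intro vv ww hvv hww hle t
      by_cases ht : t ≤ 0
      · simp only [hTmdef, if_pos ht]; exact le_refl 0
      · simp only [hTmdef, if_neg ht]
        apply mul_le_mul_of_nonneg_left _ hwinv
        apply Finset.sum_le_sum
        intro k _
        exact hf0mono _ (havg01 vv hvv _) _ (havg01 ww hww _) (havgmono vv ww hle _)
    have hTmmonot : ∀ vv : ℤ → ℝ, (∀ s, vv s ∈ Icc (0:ℝ) 1) →
        (∀ s t : ℤ, s ≤ t → vv s ≤ vv t) → ∀ s t : ℤ, s ≤ t → Tm vv s ≤ Tm vv t := by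
      intro vv hvv hmn s t hst
      by_cases hs : s ≤ 0
      · rw [show Tm vv s = 0 from by simp only [hTmdef, if_pos hs]]
        exact (hTm01 vv hvv t).1
      · have ht : ¬ t ≤ 0 := by omega
        simp only [hTmdef, if_neg hs, if_neg ht]
        apply mul_le_mul_of_nonneg_left _ hwinv
        apply Finset.sum_le_sum
        intro k _
        refine hf0mono _ (havg01 vv hvv _) _ (havg01 vv hvv _) ?_
        apply mul_le_mul_of_nonneg_left _ hwinv
        apply Finset.sum_le_sum
        intro j _
        exact hmn _ _ (by omega)
    -- the decreasing sequence of profiles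
    set v0 : ℤ → ℝ := fun t => if t ≤ 0 then 0 else 1 with hv0def
    set vseq : ℕ → ℤ → ℝ := fun n => Tm^[n] v0 with hvseqdef
    have hvs : ∀ n, vseq (n+1) = Tm (vseq n) := by
      intro n
      simp only [hvseqdef]
      exact Function.iterate_succ_apply' Tm n v0
    have hpack : ∀ n, (∀ s, vseq n s ∈ Icc (0:ℝ) 1) ∧ (∀ s : ℤ, s ≤ 0 → vseq n s = 0) ∧
        (∀ s t : ℤ, s ≤ t → vseq n s ≤ vseq n t) := by
      intro n
      induction n with
      | zero =>
        refine ⟨?_, ?_, ?_⟩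
        · intro s
          simp only [hvseqdef, Function.iterate_zero, id_eq, hv0def]
          by_cases hs : s ≤ 0 <;> simp [hs]
        · intro s hs
          simp only [hvseqdef, Function.iterate_zero, id_eq, hv0def, if_pos hs]
        · intro s t hst
          simp only [hvseqdef, Function.iterate_zero, id_eq, hv0def]
          by_cases hs : s ≤ 0
          · by_cases ht : t ≤ 0 <;> simp [hs, ht]
          · have ht : ¬ t ≤ 0 := by omega
            simp [hs, ht]
      | succ n ih =>
        rw [hvs]
        exact ⟨hTm01 _ ih.1, fun s hs => by simp only [hTmdef, if_pos hs],
          hTmmonot _ ih.1 ih.2.2⟩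
    have hdec : ∀ n, ∀ s, vseq (n+1) s ≤ vseq n s := by
      intro n
      induction n with
      | zero =>
        intro s
        rw [hvs]
        by_cases hs : s ≤ 0
        · rw [show Tm (vseq 0) s = 0 from by simp only [hTmdef, if_pos hs]]
          rw [(hpack 0).2.1 s hs]
        · refine le_trans (hTm01 _ (hpack 0).1 s).2 ?_
          simp only [hvseqdef, Function.iterate_zero, id_eq, hv0def, if_neg hs]
          exact le_refl 1
      | succ n ih =>
        intro s
        calc vseq (n+1+1) s = Tm (vseq (n+1)) s := congrFun (hvs (n+1)) s
          _ ≤ Tm (vseq n) s := hTmmono _ _ (hpack (n+1)).1 (hpack n).1 ih s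
          _ = vseq (n+1) s := (congrFun (hvs n) s).symm
    have hanti : ∀ t : ℤ, ∀ {n n' : ℕ}, n ≤ n' → vseq n' t ≤ vseq n t := by
      intro t n n' hnn'
      exact antitone_nat_of_succ_le (f := fun n => vseq n t) (fun k => hdec k t) hnn'
    -- x is a sub fixed point
    have hxfix' : ∀ t : ℤ, t ∈ Icc (1:ℤ) (L:ℤ) → x t = Tm x t := by
      intro t ht
      have ht1 : ¬ t ≤ 0 := by
        have := ht.1; omega
      rw [hxfix t ht]
      simp only [hTmdef, if_neg ht1]
      congr 1
      apply Finset.sum_congr rfl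
      intro k _
      congr 1
      simp only [havgdef]
      rw [Finset.mul_sum, Finset.mul_sum, Finset.mul_sum]
      apply Finset.sum_congr rfl
      intro j _
      rw [show t - (j:ℤ) + (k:ℤ) = t + k - j by ring]
      ring
    have hxTm : ∀ s, x s ≤ Tm x s := by
      intro s
      by_cases hs : s ∈ Icc (1:ℤ) (L:ℤ)
      · exact le_of_eq (hxfix' s hs)
      · rw [hxout s hs]
        by_cases hs0 : s ≤ 0
        · rw [show Tm x s = 0 from by simp only [hTmdef, if_pos hs0]]
        · simp only [hTmdef, if_neg hs0]
          exact mul_nonneg hwinv (Finset.sum_nonneg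
            (fun k _ => (hf0maps _ (havg01 x hx01 _)).1))
    have hxv : ∀ n s, x s ≤ vseq n s := by
      intro n
      induction n with
      | zero =>
        intro s
        simp only [hvseqdef, Function.iterate_zero, id_eq, hv0def]
        by_cases hs : s ≤ 0
        · rw [if_pos hs, hxout s (by simp only [Set.mem_Icc]; omega)]
        · rw [if_neg hs]
          exact (hx01 s).2
      | succ n ih =>
        intro s
        rw [hvs]
        exact le_trans (hxTm s) (hTmmono x (vseq n) hx01 (hpack n).1 ih s)
    -- the limiting profile
    set v : ℤ → ℝ := fun t => ⨅ n : ℕ, vseq n t with hvdef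
    have hbddb : ∀ t : ℤ, BddBelow (Set.range fun n : ℕ => vseq n t) := by
      intro t
      exact ⟨0, by rintro _ ⟨n, rfl⟩; exact ((hpack n).1 t).1⟩
    have hvle : ∀ t (n : ℕ), v t ≤ vseq n t := fun t n => ciInf_le (hbddb t) n
    have hv0 : ∀ t, 0 ≤ v t := fun t => le_ciInf (fun n => ((hpack n).1 t).1)
    have hv1 : ∀ t, v t ≤ 1 := by
      intro t
      refine le_trans (hvle t 0) ?_
      simp only [hvseqdef, Function.iterate_zero, id_eq, hv0def]
      by_cases hs : t ≤ 0 <;> simp [hs]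
    have hv01 : ∀ t, v t ∈ Icc (0:ℝ) 1 := fun t => ⟨hv0 t, hv1 t⟩
    have hvz : ∀ t : ℤ, t ≤ 0 → v t = 0 := by
      intro t ht
      refine le_antisymm ?_ (hv0 t)
      refine le_trans (hvle t 0) ?_
      simp only [hvseqdef, Function.iterate_zero, id_eq, hv0def, if_pos ht]
      exact le_refl 0
    have hvmono : ∀ s t : ℤ, s ≤ t → v s ≤ v t := by
      intro s t hst
      exact le_ciInf (fun n => le_trans (hvle s n) ((hpack n).2.2 s t hst))
    have hxvv : ∀ s, x s ≤ v s := fun s => le_ciInf (fun n => hxv n s)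
    -- v is a fixed point of Tm at positive sites
    have hfix : ∀ t : ℤ, 1 ≤ t → v t = Tm v t := by
      intro t ht
      have hnle : ¬ t ≤ 0 := by omega
      have hge : Tm v t ≤ v t := by
        apply le_ciInf
        intro n
        cases n with
        | zero =>
          refine le_trans (hTm01 v hv01 t).2 ?_
          simp only [hvseqdef, Function.iterate_zero, id_eq, hv0def, if_neg hnle]
          exact le_refl 1
        | succ n =>
          rw [hvs n]
          exact hTmmono v (vseq n) hv01 (hpack n).1 (fun s => hvle s n) t
      have hle' : v t ≤ Tm v t := by
        have hδ : ∀ δ : ℝ, 0 < δ → v t ≤ Tm v t + δ := by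
          intro δ hδ
          set δ' : ℝ := δ / (K+1) with hδ'def
          have hδ'pos : 0 < δ' := by positivity
          have hex : ∀ s : ℤ, ∃ n : ℕ, vseq n s < v s + δ' := by
            intro s
            by_contra hno
            push_neg at hno
            have hle2 : v s + δ' ≤ v s := le_ciInf hno
            linarith
          choose ns hns using hex
          set n := (Finset.Icc (t - m) (t + m)).sup ns with hndef
          have hclose : ∀ s : ℤ, t - m ≤ s → s ≤ t + m → vseq n s ≤ v s + δ' := by
            intro s h1 h2
            have hsn : ns s ≤ n := Finset.le_sup (by simp only [Finset.mem_Icc]; omega)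
            exact le_trans (hanti s hsn) (hns s).le
          have hstep : Tm (vseq n) t ≤ Tm v t + K * δ' := by
            simp only [hTmdef, if_neg hnle]
            have hterm : ∀ k ∈ Finset.range (m+1),
                f₀ (avg (vseq n) (t+k)) ≤ f₀ (avg v (t+k)) + K * δ' := by
              intro k hk
              have hkm : (k:ℤ) ≤ m := by
                have := Finset.mem_range.1 hk
                omega
              have ha1 : avg v (t+k) ∈ Icc (0:ℝ) 1 := havg01 v hv01 _
              have ha2 : avg (vseq n) (t+k) ∈ Icc (0:ℝ) 1 := havg01 _ (hpack n).1 _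
              have hged : avg v (t+k) ≤ avg (vseq n) (t+k) :=
                havgmono v _ (fun s => hvle s n) _
              have hle2 : avg (vseq n) (t+k) ≤ avg v (t+k) + δ' := by
                have hsum : ∑ j ∈ Finset.range (m+1), vseq n (t + k - j)
                    ≤ (∑ j ∈ Finset.range (m+1), v (t + k - j)) + ((m:ℝ)+1) * δ' := by
                  have h4 : ∑ j ∈ Finset.range (m+1), vseq n (t + k - j)
                      ≤ ∑ j ∈ Finset.range (m+1), (v (t + k - j) + δ') := by
                    apply Finset.sum_le_sum
                    intro j hj
                    have hjm : (j:ℤ) ≤ m := by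
                      have := Finset.mem_range.1 hj
                      omega
                    exact hclose _ (by omega) (by omega)
                  have h5 : ∑ j ∈ Finset.range (m+1), (v (t + k - j) + δ')
                      = (∑ j ∈ Finset.range (m+1), v (t + k - j)) + ((m:ℝ)+1) * δ' := by
                    rw [Finset.sum_add_distrib, Finset.sum_const, Finset.card_range,
                      nsmul_eq_mul]
                    push_cast
                    ring
                  linarith
                show (1/w) * ∑ j ∈ Finset.range (m+1), vseq n (t + k - j)
                    ≤ (1/w) * ∑ j ∈ Finset.range (m+1), v (t + k - j) + δ'
                calc (1/w) * ∑ j ∈ Finset.range (m+1), vseq n (t + k - j)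
                    ≤ (1/w) * ((∑ j ∈ Finset.range (m+1), v (t + k - j)) + ((m:ℝ)+1) * δ') :=
                      mul_le_mul_of_nonneg_left hsum hwinv
                  _ = (1/w) * ∑ j ∈ Finset.range (m+1), v (t + k - j) + δ' := by
                      rw [mul_add, ← mul_assoc, hw1, one_mul]
              have habs := hf0lip _ ha2 _ ha1
              have h5 : f₀ (avg (vseq n) (t+k)) - f₀ (avg v (t+k))
                  ≤ K * |avg (vseq n) (t+k) - avg v (t+k)| :=
                le_trans (le_abs_self _) habs
              have h6 : |avg (vseq n) (t+k) - avg v (t+k)| ≤ δ' := by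
                rw [abs_of_nonneg (by linarith)]
                linarith
              nlinarith
            calc (1/w) * ∑ k ∈ Finset.range (m+1), f₀ (avg (vseq n) (t+k))
                ≤ (1/w) * ∑ k ∈ Finset.range (m+1), (f₀ (avg v (t+k)) + K * δ') :=
                  mul_le_mul_of_nonneg_left (Finset.sum_le_sum hterm) hwinv
              _ = (1/w) * ∑ k ∈ Finset.range (m+1), f₀ (avg v (t+k)) + K * δ' := by
                  rw [Finset.sum_add_distrib, Finset.sum_const, Finset.card_range,
                    nsmul_eq_mul, mul_add]
                  push_cast
                  rw [← mul_assoc, hw1, one_mul]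
          have h7 : v t ≤ vseq (n+1) t := hvle t (n+1)
          rw [hvs n] at h7
          have h9 : δ' * (K+1) = δ := by
            rw [hδ'def]
            field_simp
          nlinarith [hstep, hδ'pos.le, hK0]
        by_contra hcon2
        push_neg at hcon2
        have := hδ ((v t - Tm v t)/2) (by linarith)
        linarith
      exact le_antisymm hle' hge
    -- the asymptotic value A
    set A := sSup (Set.range v) with hAdef
    have hbddA : BddAbove (Set.range v) := ⟨1, by rintro _ ⟨s, rfl⟩; exact hv1 s⟩
    have hvA : ∀ s, v s ≤ A := fun s => le_csSup hbddA ⟨s, rfl⟩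
    have hA1 : A ≤ 1 := csSup_le ⟨v 0, ⟨0, rfl⟩⟩ (by rintro _ ⟨s, rfl⟩; exact hv1 s)
    -- the maximum of x
    have ht₁mem : t₁ ∈ Icc (1:ℤ) (L:ℤ) := by
      by_contra hmem
      exact ht₁ (hxout t₁ hmem)
    have ht₁F : t₁ ∈ Finset.Icc (1:ℤ) (L:ℤ) := by
      simp only [Set.mem_Icc] at ht₁mem
      exact Finset.mem_Icc.2 ht₁mem
    obtain ⟨ts, htsF, hts⟩ := Finset.exists_max_image (Finset.Icc (1:ℤ) (L:ℤ)) x ⟨t₁, ht₁F⟩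
    set M := x ts with hMdef
    have hMub : ∀ s, x s ≤ M := by
      intro s
      by_cases hs : s ∈ Icc (1:ℤ) (L:ℤ)
      · refine hts s ?_
        simp only [Set.mem_Icc] at hs
        exact Finset.mem_Icc.2 hs
      · rw [hxout s hs]
        exact (hx01 ts).1
    have hMpos : 0 < M :=
      lt_of_lt_of_le (lt_of_le_of_ne (hx01 t₁).1 (Ne.symm ht₁)) (hts t₁ ht₁F)
    have hM1 : M ≤ 1 := (hx01 ts).2
    have htsmem : ts ∈ Icc (1:ℤ) (L:ℤ) := by
      rw [Finset.mem_Icc] at htsF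
      exact Set.mem_Icc.2 htsF
    have hM01 : M ∈ Icc (0:ℝ) 1 := ⟨(hx01 ts).1, hM1⟩
    have hMf : M ≤ f₀ M := by
      have h1 : M = Tm x ts := hxfix' ts htsmem
      have hts1 : ¬ ts ≤ 0 := by
        have := htsmem.1
        omega
      have h2 : ∀ k ∈ Finset.range (m+1), f₀ (avg x (ts+k)) ≤ f₀ M := by
        intro k _
        refine hf0mono _ (havg01 x hx01 _) _ hM01 ?_
        show (1/w) * ∑ j ∈ Finset.range (m+1), x (ts + k - j) ≤ M
        calc (1/w) * ∑ j ∈ Finset.range (m+1), x (ts + k - j)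
            ≤ (1/w) * ∑ _j ∈ Finset.range (m+1), M :=
              mul_le_mul_of_nonneg_left (Finset.sum_le_sum (fun j _ => hMub _)) hwinv
          _ = M := by
              rw [Finset.sum_const, Finset.card_range, nsmul_eq_mul]
              push_cast
              rw [← mul_assoc, hw1, one_mul]
      have hgoal : Tm x ts ≤ f₀ M := by
        simp only [hTmdef, if_neg hts1]
        calc (1/w) * ∑ k ∈ Finset.range (m+1), f₀ (avg x (ts+k))
            ≤ (1/w) * ∑ _k ∈ Finset.range (m+1), f₀ M :=
              mul_le_mul_of_nonneg_left (Finset.sum_le_sum h2) hwinv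
          _ = f₀ M := by
              rw [Finset.sum_const, Finset.card_range, nsmul_eq_mul]
              push_cast
              rw [← mul_assoc, hw1, one_mul]
      calc M = Tm x ts := h1
        _ ≤ f₀ M := hgoal
    have hMu : u ≤ M := by
      by_contra hMu'
      push_neg at hMu'
      exact absurd hMf (not_le.2 (hf0lt M hMpos hMu'))
    have hAu : u ≤ A := le_trans hMu (le_trans (hxvv ts) (hvA ts))
    have hA01 : A ∈ Icc (0:ℝ) 1 := ⟨le_trans (hv0 0) (hvA 0), hA1⟩
    have hAmem : A ∈ Icc u 1 := ⟨hAu, hA1⟩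
    -- the final potential estimate
    have hfinal : A^2/2 - (∫ t in (0:ℝ)..A, f₀ t) ≤ K/(2*w) := by
      apply le_of_forall_pos_le_add
      intro δ hδ
      have hlt3 : A - δ/2 < sSup (Set.range v) := by
        rw [← hAdef]
        linarith
      obtain ⟨val, hvalmem, hval⟩ :=
        exists_lt_of_lt_csSup (Set.range_nonempty v) hlt3
      obtain ⟨t₀', rfl⟩ := hvalmem
      set t₀ : ℤ := max t₀' 1 with ht₀def
      have ht₀1 : (1:ℤ) ≤ t₀ := le_max_right _ _
      have hvt₀ : A - δ/2 < v t₀ := lt_of_lt_of_le hval (hvmono t₀' t₀ (le_max_left _ _))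
      set N : ℤ := t₀ + m with hNdef
      have hN1 : (1:ℤ) ≤ N := by omega
      have h0N : (0:ℤ) ≤ N := by omega
      have hNm : N - m = t₀ := by omega
      set y : ℤ → ℝ := fun t => avg v t with hydef
      set e : ℤ → ℝ := fun t => v t - v (t-1) with hedef
      have hy01 : ∀ t, y t ∈ Icc (0:ℝ) 1 := fun t => havg01 v hv01 t
      have he0 : ∀ s : ℤ, s ≤ 0 → e s = 0 := by
        intro s hs
        simp only [hedef]
        rw [hvz s hs, hvz (s-1) (by omega)]
        ring
      have hee : ∀ s, 0 ≤ e s := fun s => sub_nonneg.2 (hvmono (s-1) s (by omega))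
      have hymono : ∀ s t : ℤ, s ≤ t → y s ≤ y t := by
        intro s t hst
        simp only [hydef, havgdef]
        exact mul_le_mul_of_nonneg_left
          (Finset.sum_le_sum (fun j _ => hvmono _ _ (by omega))) hwinv
      have hy0 : y 0 = 0 := by
        simp only [hydef, havgdef]
        have h5 : ∑ j ∈ Finset.range (m+1), v (0 - (j:ℤ)) = 0 :=
          Finset.sum_eq_zero (fun j _ => hvz (0 - (j:ℤ)) (by omega))
        rw [h5, mul_zero]
      have hyA : ∀ t, y t ≤ A := by
        intro t
        simp only [hydef, havgdef]
        calc (1/w) * ∑ j ∈ Finset.range (m+1), v (t - j)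
            ≤ (1/w) * ∑ _j ∈ Finset.range (m+1), A :=
              mul_le_mul_of_nonneg_left (Finset.sum_le_sum (fun j _ => hvA _)) hwinv
          _ = A := by
              rw [Finset.sum_const, Finset.card_range, nsmul_eq_mul]
              push_cast
              rw [← mul_assoc, hw1, one_mul]
      set Δ : ℤ → ℝ := fun i => y i - y (i-1) with hΔdef
      have hΔe : ∀ i, Δ i = (1/w) * ∑ j ∈ Finset.range (m+1), e (i - j) := by
        intro i
        simp only [hΔdef, hydef, havgdef]
        rw [← mul_sub, ← Finset.sum_sub_distrib]
        congr 1
        apply Finset.sum_congr rfl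
        intro j _
        simp only [hedef]
        rw [show i - 1 - (j:ℤ) = i - j - 1 from by ring]
      have hΔpos : ∀ i, 0 ≤ Δ i := fun i => sub_nonneg.2 (hymono (i-1) i (by omega))
      have hIocmap : ∑ s ∈ Finset.Ioc (0 - (m:ℤ) - 1) (0:ℤ), e s
          = 0 := by
        apply Finset.sum_eq_zero
        intro s hs
        simp only [Finset.mem_Ioc] at hs
        exact he0 s hs.2
      have hΔle : ∀ i, Δ i ≤ 1/w := by
        intro i
        rw [hΔe i]
        have hmapset : Finset.Ioc (i - (m:ℤ) - 1) i = (Finset.range (m+1)).map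
            ⟨fun j : ℕ => i - (j:ℤ), fun a b hab => by simp only [] at hab; omega⟩ := by
          ext s
          simp only [Finset.mem_Ioc, Finset.mem_map, Finset.mem_range,
            Function.Embedding.coeFn_mk]
          constructor
          · rintro ⟨h1, h2⟩
            exact ⟨(i - s).toNat, by omega, show i - ((i - s).toNat : ℤ) = s by omega⟩
          · rintro ⟨j, hj, rfl⟩
            show i - (m:ℤ) - 1 < i - (j:ℤ) ∧ i - (j:ℤ) ≤ i
            omega
        have hrw : ∑ j ∈ Finset.range (m+1), e (i - j)
            = ∑ s ∈ Finset.Ioc (i - (m:ℤ) - 1) i, e s := by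
          rw [hmapset, Finset.sum_map]
          rfl
        have htel : ∑ s ∈ Finset.Ioc (i - (m:ℤ) - 1) i, e s = v i - v (i - m - 1) := by
          have h5 := TS_tele' v (a := i - m - 1) (b := i) (by omega)
          rw [← h5]
        rw [hrw, htel]
        have h1 : v i - v (i - m - 1) ≤ 1 := by
          have := hv1 i
          have := hv0 (i - (m:ℤ) - 1)
          linarith
        calc (1/w) * (v i - v (i - m - 1)) ≤ (1/w) * 1 :=
            mul_le_mul_of_nonneg_left h1 hwinv
          _ = 1/w := mul_one _
      have hfixy : ∀ s : ℤ, 1 ≤ s →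
          v s = (1/w) * ∑ k ∈ Finset.range (m+1), f₀ (y (s + k)) := by
        intro s hs
        have h5 := hfix s hs
        rw [h5]
        simp only [hTmdef, if_neg (show ¬ s ≤ 0 by omega)]
        rfl
      -- telescoping identity
      have hT12 : ∑ i ∈ Finset.Ioc (0:ℤ) N,
          (((∫ t in (0:ℝ)..(y i), f₀ t) - ∫ t in (0:ℝ)..(y (i-1)), f₀ t)
            - ((v i)^2/2 - (v (i-1))^2/2))
          = ((∫ t in (0:ℝ)..(y N), f₀ t) - ∫ t in (0:ℝ)..(y 0), f₀ t)
            - ((v N)^2/2 - (v 0)^2/2) := by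
        rw [Finset.sum_sub_distrib]
        rw [TS_tele' (fun i => ∫ t in (0:ℝ)..(y i), f₀ t) h0N,
          TS_tele' (fun i => (v i)^2/2) h0N]
      -- termwise lower bound
      have hterm : ∀ i ∈ Finset.Ioc (0:ℤ) N,
          f₀ (y i) * Δ i - (K/(2*w)) * Δ i - v i * e i
            ≤ ((∫ t in (0:ℝ)..(y i), f₀ t) - ∫ t in (0:ℝ)..(y (i-1)), f₀ t)
              - ((v i)^2/2 - (v (i-1))^2/2) := by
        intro i _
        have hyi : y i ∈ Icc (0:ℝ) 1 := hy01 i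
        have hyi1 : y (i-1) ∈ Icc (0:ℝ) 1 := hy01 (i-1)
        have hab : y (i-1) ≤ y i := hymono _ _ (by omega)
        have hFdiff : (∫ t in (0:ℝ)..(y i), f₀ t) - (∫ t in (0:ℝ)..(y (i-1)), f₀ t)
            = ∫ t in (y (i-1))..(y i), f₀ t := TS_Fsub hf0cont hyi1 hyi
        have hkey2 : f₀ (y i) * (y i - y (i-1)) - K * (y i - y (i-1))^2/2
            ≤ ∫ t in (y (i-1))..(y i), f₀ t := by
          apply TS_key_integral hf0cont ?_ hab hyi1 hyi
          intro s hs t ht hts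
          calc f₀ s - f₀ t ≤ |f₀ s - f₀ t| := le_abs_self _
            _ ≤ K * |s - t| := hf0lip s hs t ht
            _ = K * (s - t) := by rw [abs_of_nonneg (by linarith)]
        have hΔeq : y i - y (i-1) = Δ i := by simp only [hΔdef]
        rw [hΔeq] at hkey2
        have hqd : K * (Δ i)^2/2 ≤ (K/(2*w)) * Δ i := by
          have h6 := hΔpos i
          have h7 := hΔle i
          have h8 : K * (Δ i) * (Δ i) ≤ K * (1/w) * Δ i := by
            apply mul_le_mul_of_nonneg_right _ h6
            exact mul_le_mul_of_nonneg_left h7 hK0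
          have h9' : ∀ a b : ℝ, K/(2*b) * a = (K * (1/b) * a)/2 := fun a b => by ring
          have h10' : ∀ a : ℝ, K * a^2/2 = (K * a * a)/2 := fun a => by ring
          have h9 := h9' (Δ i) w
          have h10 := h10' (Δ i)
          linarith
        have hsq : (v i)^2/2 - (v (i-1))^2/2 = v i * e i - (e i)^2/2 := by
          simp only [hedef]
          ring
        have he2 : 0 ≤ (e i)^2/2 := by positivity
        rw [hFdiff, hsq]
        linarith
      -- sum the termwise bound
      have hsum1 : (∑ i ∈ Finset.Ioc (0:ℤ) N, f₀ (y i) * Δ i)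
            - (K/(2*w)) * (∑ i ∈ Finset.Ioc (0:ℤ) N, Δ i)
            - (∑ i ∈ Finset.Ioc (0:ℤ) N, v i * e i)
          ≤ (∫ t in (0:ℝ)..(y N), f₀ t) - (v N)^2/2 := by
        have h5 := Finset.sum_le_sum hterm
        rw [hT12, hy0, hvz 0 (le_refl 0)] at h5
        have hFi0 : (∫ t in (0:ℝ)..(0:ℝ), f₀ t) = 0 := intervalIntegral.integral_same
        rw [hFi0] at h5
        have h6 : ∑ i ∈ Finset.Ioc (0:ℤ) N,
            (f₀ (y i) * Δ i - (K/(2*w)) * Δ i - v i * e i)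
            = (∑ i ∈ Finset.Ioc (0:ℤ) N, f₀ (y i) * Δ i)
              - (K/(2*w)) * (∑ i ∈ Finset.Ioc (0:ℤ) N, Δ i)
              - ∑ i ∈ Finset.Ioc (0:ℤ) N, v i * e i := by
          rw [Finset.sum_sub_distrib, Finset.sum_sub_distrib, Finset.mul_sum]
        rw [h6] at h5
        norm_num at h5
        linarith
      have hΔsum : ∑ i ∈ Finset.Ioc (0:ℤ) N, Δ i = y N := by
        have h5 : ∑ i ∈ Finset.Ioc (0:ℤ) N, Δ i = y N - y 0 := by
          have h6 := TS_tele' (fun i => y i) h0N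
          rw [← h6]
        rw [h5, hy0, sub_zero]
      -- the index-swap estimate
      set c : ℕ → ℤ → ℝ := fun j s => (1/w) * (f₀ (y (s + j)) * e s) with hcdef
      have hS1 : ∑ i ∈ Finset.Ioc (0:ℤ) N, f₀ (y i) * Δ i
          = (∑ j ∈ Finset.range (m+1), ∑ s ∈ Finset.Ioc (0:ℤ) N, c j s)
            - ∑ j ∈ Finset.range (m+1), ∑ s ∈ Finset.Ioc (N - (j:ℤ)) N, c j s := by
        have step1 : ∑ i ∈ Finset.Ioc (0:ℤ) N, f₀ (y i) * Δ i
            = ∑ j ∈ Finset.range (m+1), ∑ i ∈ Finset.Ioc (0:ℤ) N,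
                (1/w) * (f₀ (y i) * e (i - j)) := by
          rw [Finset.sum_comm]
          apply Finset.sum_congr rfl
          intro i _
          rw [hΔe i, Finset.mul_sum, Finset.mul_sum]
          exact Finset.sum_congr rfl (fun j _ => by ring)
        have step2 : ∀ j ∈ Finset.range (m+1),
            (∑ i ∈ Finset.Ioc (0:ℤ) N, (1/w) * (f₀ (y i) * e (i - j)))
            = (∑ s ∈ Finset.Ioc (0:ℤ) N, c j s)
              - ∑ s ∈ Finset.Ioc (N - (j:ℤ)) N, c j s := by
          intro j hjr
          have hjm : (j:ℤ) ≤ m := by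
            have := Finset.mem_range.1 hjr
            omega
          have hmap : Finset.Ioc (0:ℤ) N
              = (Finset.Ioc (-(j:ℤ)) (N - j)).map (addRightEmbedding (j:ℤ)) := by
            rw [Finset.map_add_right_Ioc]
            congr 1 <;> ring
          conv_lhs => rw [hmap, Finset.sum_map]
          simp only [addRightEmbedding_apply]
          have hcongr : ∀ s ∈ Finset.Ioc (-(j:ℤ)) (N - j),
              (1/w) * (f₀ (y (s + j)) * e (s + j - j)) = c j s := by
            intro s _
            simp only [hcdef]
            rw [show s + (j:ℤ) - j = s from by ring]
          rw [Finset.sum_congr rfl hcongr]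
          have hsub : Finset.Ioc (0:ℤ) (N - j) ⊆ Finset.Ioc (-(j:ℤ)) (N - j) := by
            intro s hs
            simp only [Finset.mem_Ioc] at *
            omega
          have hvanish : ∀ s ∈ Finset.Ioc (-(j:ℤ)) (N - j),
              s ∉ Finset.Ioc (0:ℤ) (N - j) → c j s = 0 := by
            intro s hs hns
            simp only [Finset.mem_Ioc] at hs hns
            have hs0 : s ≤ 0 := by omega
            simp only [hcdef]
            rw [he0 s hs0]
            ring
          rw [← Finset.sum_subset hsub hvanish]
          have hsplit2 := TS_Ioc_split (c j) (a := (0:ℤ)) (b := N - j) (c := N)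
            (by omega) (by omega)
          linarith
        rw [step1, Finset.sum_congr rfl step2, Finset.sum_sub_distrib]
      have hP : ∑ j ∈ Finset.range (m+1), ∑ s ∈ Finset.Ioc (0:ℤ) N, c j s
          = ∑ s ∈ Finset.Ioc (0:ℤ) N, v s * e s := by
        rw [Finset.sum_comm]
        apply Finset.sum_congr rfl
        intro s hs
        have hs1 : (1:ℤ) ≤ s := by
          simp only [Finset.mem_Ioc] at hs
          omega
        simp only [hcdef]
        calc ∑ j ∈ Finset.range (m+1), (1/w) * (f₀ (y (s + j)) * e s)
            = ((1/w) * ∑ j ∈ Finset.range (m+1), f₀ (y (s + j))) * e s := by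
              rw [Finset.mul_sum, Finset.sum_mul]
              exact Finset.sum_congr rfl (fun j _ => by ring)
          _ = v s * e s := by rw [← hfixy s hs1]
      have hD : ∑ j ∈ Finset.range (m+1), ∑ s ∈ Finset.Ioc (N - (j:ℤ)) N, c j s
          ≤ v N - v (N - m) := by
        have htel3 : ∑ s ∈ Finset.Ioc (N - (m:ℤ)) N, e s = v N - v (N - m) := by
          have h5 := TS_tele' v (a := N - m) (b := N) (by omega)
          rw [← h5]
        have hj : ∀ j ∈ Finset.range (m+1), (∑ s ∈ Finset.Ioc (N - (j:ℤ)) N, c j s)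
            ≤ (1/w) * ∑ s ∈ Finset.Ioc (N - (m:ℤ)) N, e s := by
          intro j hjr
          have hjm : (j:ℤ) ≤ m := by
            have := Finset.mem_range.1 hjr
            omega
          have h1 : (∑ s ∈ Finset.Ioc (N - (j:ℤ)) N, c j s)
              ≤ ∑ s ∈ Finset.Ioc (N - (m:ℤ)) N, c j s := by
            apply Finset.sum_le_sum_of_subset_of_nonneg
            · intro s hs
              simp only [Finset.mem_Ioc] at *
              omega
            · intro s _ _
              simp only [hcdef]
              have h3 := (hf0maps _ (hy01 (s + j))).1
              have h4 := hee s
              positivity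
          have h2 : (∑ s ∈ Finset.Ioc (N - (m:ℤ)) N, c j s)
              ≤ (1/w) * ∑ s ∈ Finset.Ioc (N - (m:ℤ)) N, e s := by
            rw [Finset.mul_sum]
            apply Finset.sum_le_sum
            intro s _
            simp only [hcdef]
            have h3 := hf0maps _ (hy01 (s + j))
            have h4 := hee s
            calc (1/w) * (f₀ (y (s + j)) * e s) ≤ (1/w) * (1 * e s) := by
                  apply mul_le_mul_of_nonneg_left _ hwinv
                  exact mul_le_mul_of_nonneg_right h3.2 h4
              _ = (1/w) * e s := by ring
          linarith
        calc ∑ j ∈ Finset.range (m+1), ∑ s ∈ Finset.Ioc (N - (j:ℤ)) N, c j s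
            ≤ ∑ _j ∈ Finset.range (m+1), (1/w) * ∑ s ∈ Finset.Ioc (N - (m:ℤ)) N, e s :=
              Finset.sum_le_sum hj
          _ = v N - v (N - m) := by
              rw [Finset.sum_const, Finset.card_range, nsmul_eq_mul, htel3]
              push_cast
              rw [← mul_assoc, mul_comm ((m:ℝ)+1) (1/w), hw1, one_mul]
      -- put the pieces together
      have hvNm : A - δ/2 ≤ v (N - m) := by
        rw [hNm]
        linarith
      have hvN : A - δ/2 ≤ v N := le_trans hvNm (hvmono _ _ (by omega))
      have htail : v N - v (N - m) ≤ δ/2 := by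
        have := hvA N
        linarith
      have hKt : (K/(2*w)) * (y N) ≤ K/(2*w) := by
        have h5 := (hy01 N).1
        have h6 := (hy01 N).2
        have h7 : (0:ℝ) ≤ K/(2*w) := by positivity
        nlinarith
      have hmain : (v N)^2/2 - (∫ t in (0:ℝ)..(y N), f₀ t) ≤ δ/2 + K/(2*w) := by
        have h5 : (∑ s ∈ Finset.Ioc (0:ℤ) N, v s * e s) - (v N - v (N - m))
            ≤ ∑ i ∈ Finset.Ioc (0:ℤ) N, f₀ (y i) * Δ i := by
          rw [hS1, hP]
          linarith [hD]
        rw [hΔsum] at hsum1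
        linarith [hsum1, h5, htail, hKt]
      have hF2 : (∫ t in (0:ℝ)..(y N), f₀ t) ≤ ∫ t in (0:ℝ)..A, f₀ t := by
        have h5 : ((∫ t in (0:ℝ)..A, f₀ t) - ∫ t in (0:ℝ)..(y N), f₀ t)
            = ∫ t in (y N)..A, f₀ t := TS_Fsub hf0cont (hy01 N) hA01
        have h6 : (0:ℝ) ≤ ∫ t in (y N)..A, f₀ t :=
          TS_int_nonneg (fun t ht => (hf0maps t ht).1) (hy01 N) hA01 (hyA N)
        linarith
      have hsq2 : A^2/2 - (v N)^2/2 ≤ δ/2 := by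
        have h5 := hvA N
        have h6 := hv0 N
        nlinarith
      linarith [hmain, hF2, hsq2]
    -- contradiction with the energy gap
    have hΔEA : ΔE ≤ A^2/2 - ∫ t in (0:ℝ)..A, f₀ t := hmin A hAmem
    have hmK : K / ΔE ≤ (m:ℝ) := le_trans (Nat.le_ceil _) (by exact_mod_cast hm)
    have hKm : K ≤ (m:ℝ) * ΔE := by
      rw [div_le_iff₀ hΔEpos] at hmK
      linarith
    have hfin2 : ΔE ≤ K/(2*w) := le_trans hΔEA hfinal
    rw [le_div_iff₀ (by positivity)] at hfin2
    rw [hwdef] at hfin2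
    nlinarith [hΔEpos, hKm, hfin2, Nat.cast_nonneg (α := ℝ) m]
  exact hzero
end
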